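/- arXiv:1411.7323 — 11 statements merged into one kernel-verified Lean document; each statement's English description precedes it below -/
import Mathlib

section
/- If η(ω)f(ω) > 0 on a set of positive μ-measure, then the function g : [0,1] → ℝ defined by g(x) = ∫_Ω q(ω) f(ω) (β(ω)x + η(ω))/(β(ω)x + η(ω) + γ(ω)) dμ(ω) − x has exactly one root in [0,1], and this root lies in the open interval (0,1). -/
open MeasureTheory Filter Set Topology

lemma aux_concave (u v c t : ℝ) (hu : 0 ≤ u) (hv : 0 ≤ v) (hc : 0 < c)
    (ht0 : 0 ≤ t) (ht1 : t ≤ 1) :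
    (1-t) * (u/(u+c)) + t * (v/(v+c)) ≤ ((1-t)*u + t*v)/((1-t)*u + t*v + c) := by
  have hA : 0 < u + c := by linarith
  have hB : 0 < v + c := by linarith
  have hC : 0 < (1-t)*u + t*v + c := by nlinarith
  rw [← mul_div_assoc, ← mul_div_assoc, div_add_div _ _ hA.ne' hB.ne',
    div_le_div_iff₀ (by positivity) hC]
  nlinarith [mul_nonneg (mul_nonneg (mul_nonneg (sub_nonneg.2 ht1) ht0) hc.le) (sq_nonneg (u-v))]

/-- If `η f > 0` on a set of positive measure then `g` has exactly one root in
`[0,1]`, and it lies in `(0,1)`. -/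
theorem stmt_3
    {Ω : Type*} [MeasurableSpace Ω] (μ : Measure Ω) [IsProbabilityMeasure μ]
    (q β γ η f : Ω → ℝ)
    (hmq : Measurable q) (hmβ : Measurable β) (hmγ : Measurable γ)
    (hmη : Measurable η) (hmf : Measurable f)
    (h0q : ∀ ω, 0 ≤ q ω) (h0β : ∀ ω, 0 ≤ β ω) (h0γ : ∀ ω, 0 ≤ γ ω)
    (h0η : ∀ ω, 0 ≤ η ω) (h0f : ∀ ω, 0 ≤ f ω)
    (M : ℝ) (hbq : ∀ ω, q ω ≤ M) (hbβ : ∀ ω, β ω ≤ M) (hbγ : ∀ ω, γ ω ≤ M)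
    (hbη : ∀ ω, η ω ≤ M) (hbf : ∀ ω, f ω ≤ M)
    (hfint : ∫ ω, f ω ∂μ = 1) (hqfint : ∫ ω, q ω * f ω ∂μ = 1)
    (hqpos : ∀ᵐ ω ∂μ, 0 < q ω)
    (ε : ℝ) (hε : 0 < ε) (hβε : ∀ ω, ε ≤ β ω) (hγε : ∀ ω, ε ≤ γ ω)
    (g : ℝ → ℝ)
    (hgdef : ∀ x, g x =
      (∫ ω, q ω * f ω * ((β ω * x + η ω) / (β ω * x + η ω + γ ω)) ∂μ) - x)
    (hηf : 0 < μ {ω | 0 < η ω * f ω}) :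
    ∃ x ∈ Ioo (0:ℝ) 1, g x = 0 ∧ ∀ y ∈ Icc (0:ℝ) 1, g y = 0 → y = x := by
  classical
  -- Ω is nonempty, so ε ≤ M
  have hΩ : Nonempty Ω := by
    by_contra hc
    rw [not_nonempty_iff] at hc
    have h1 : μ Set.univ = 1 := measure_univ
    rw [Set.univ_eq_empty_iff.2 hc, measure_empty] at h1
    exact zero_ne_one h1
  obtain ⟨ω₀⟩ := hΩ
  have hεM : ε ≤ M := le_trans (hβε ω₀) (hbβ ω₀)
  have hM : 0 < M := lt_of_lt_of_le hε hεM
  set h : ℝ → Ω → ℝ :=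
    fun x ω => q ω * f ω * ((β ω * x + η ω) / (β ω * x + η ω + γ ω)) with hh
  have hgF : ∀ x, g x = (∫ ω, h x ω ∂μ) - x := hgdef
  -- denominator bound for x ≥ 0
  have hden : ∀ x : ℝ, 0 ≤ x → ∀ ω, ε ≤ β ω * x + η ω + γ ω := by
    intro x hx ω
    nlinarith [mul_nonneg (h0β ω) hx, h0η ω, hγε ω]
  have hφ0 : ∀ x : ℝ, 0 ≤ x → ∀ ω, 0 ≤ (β ω * x + η ω) / (β ω * x + η ω + γ ω) := by
    intro x hx ω
    have hd := hden x hx ω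
    exact div_nonneg (by nlinarith [mul_nonneg (h0β ω) hx, h0η ω]) (by linarith)
  have hφ1 : ∀ x : ℝ, 0 ≤ x → ∀ ω, (β ω * x + η ω) / (β ω * x + η ω + γ ω) ≤ 1 := by
    intro x hx ω
    have hd := hden x hx ω
    rw [div_le_one (by linarith)]
    nlinarith [h0γ ω, hγε ω]
  have hmeas : ∀ x : ℝ, AEStronglyMeasurable (h x) μ := by
    intro x
    exact ((hmq.mul hmf).mul (((hmβ.mul_const x).add hmη).div
      ((((hmβ.mul_const x).add hmη)).add hmγ))).aestronglyMeasurable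
  have h0h : ∀ x : ℝ, 0 ≤ x → ∀ ω, 0 ≤ h x ω := by
    intro x hx ω
    exact mul_nonneg (mul_nonneg (h0q ω) (h0f ω)) (hφ0 x hx ω)
  have hint : ∀ x : ℝ, 0 ≤ x → Integrable (h x) μ := by
    intro x hx
    refine (integrable_const (M * M)).mono' (hmeas x) (ae_of_all _ fun ω => ?_)
    rw [Real.norm_eq_abs, abs_of_nonneg (h0h x hx ω)]
    calc h x ω ≤ q ω * f ω * 1 :=
        mul_le_mul_of_nonneg_left (hφ1 x hx ω) (mul_nonneg (h0q ω) (h0f ω))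
      _ = q ω * f ω := mul_one _
      _ ≤ M * M := mul_le_mul (hbq ω) (hbf ω) (h0f ω) hM.le
  have hqfI : Integrable (fun ω => q ω * f ω) μ := by
    refine (integrable_const (M * M)).mono' (hmq.mul hmf).aestronglyMeasurable
      (ae_of_all _ fun ω => ?_)
    rw [Real.norm_eq_abs, abs_of_nonneg (mul_nonneg (h0q ω) (h0f ω))]
    exact mul_le_mul (hbq ω) (hbf ω) (h0f ω) hM.le
  -- continuity of g on [0,1]
  have hcont : ContinuousOn g (Icc (0:ℝ) 1) := by
    have hFc : ∀ x₀ ∈ Icc (0:ℝ) 1, ContinuousAt (fun x => ∫ ω, h x ω ∂μ) x₀ := by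
      intro x₀ hx₀
      set C : ℝ := M * M * (3 * M / (ε / 2)) with hC
      have hδpos : (0:ℝ) < ε / (2 * M) := by positivity
      have hsmem : Ioo (-(ε / (2 * M))) 2 ∈ 𝓝 x₀ :=
        isOpen_Ioo.mem_nhds ⟨by linarith [hx₀.1], by linarith [hx₀.2]⟩
      refine continuousAt_of_dominated (Filter.Eventually.of_forall fun x => hmeas x) ?_ (integrable_const C) ?_
      · filter_upwards [hsmem] with x hx
        refine ae_of_all _ fun ω => ?_
        have hδ : M * (ε / (2 * M)) = ε / 2 := by field_simp
        have hd2 : ε / 2 ≤ β ω * x + η ω + γ ω := by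
          rcases le_or_gt 0 x with hx0 | hx0
          · linarith [hden x hx0 ω]
          · have h1 : 0 ≤ (M - β ω) * (-x) :=
              mul_nonneg (by linarith [hbβ ω]) (by linarith)
            have h2 : M * x ≥ M * (-(ε / (2 * M))) :=
              mul_le_mul_of_nonneg_left hx.1.le hM.le
            have h3 : β ω * x ≥ M * x := by nlinarith
            have := hγε ω; have := h0η ω
            nlinarith
        have hnum : |β ω * x + η ω| ≤ 3 * M := by
          rw [abs_le]
          constructor
          · rcases le_or_gt 0 x with hx0 | hx0
            · nlinarith [mul_nonneg (h0β ω) hx0, h0η ω]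
            · have h1 : 0 ≤ (M - β ω) * (-x) :=
                mul_nonneg (by linarith [hbβ ω]) (by linarith)
              have h2 : M * x ≥ M * (-(ε / (2 * M))) :=
                mul_le_mul_of_nonneg_left hx.1.le hM.le
              have hδ : M * (ε / (2 * M)) = ε / 2 := by field_simp
              have := h0η ω
              nlinarith
          · have : β ω * x ≤ M * 2 := by
              rcases le_or_gt 0 x with hx0 | hx0
              · calc β ω * x ≤ M * x := mul_le_mul_of_nonneg_right (hbβ ω) hx0
                  _ ≤ M * 2 := mul_le_mul_of_nonneg_left hx.2.le hM.le
              · nlinarith [mul_nonneg (h0β ω) (neg_nonneg.2 hx0.le)]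
            linarith [hbη ω]
        have habs : ‖h x ω‖ = q ω * f ω * (|β ω * x + η ω| / (β ω * x + η ω + γ ω)) := by
          show |q ω * f ω * ((β ω * x + η ω) / (β ω * x + η ω + γ ω))| = _
          rw [abs_mul, abs_mul, abs_div, abs_of_nonneg (h0q ω), abs_of_nonneg (h0f ω),
            abs_of_pos (by linarith : (0:ℝ) < β ω * x + η ω + γ ω)]
        rw [habs, hC]
        refine mul_le_mul (mul_le_mul (hbq ω) (hbf ω) (h0f ω) hM.le) ?_
          (div_nonneg (abs_nonneg _) (by linarith)) (by positivity)
        exact div_le_div₀ (by positivity) hnum (by positivity) hd2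
      · refine ae_of_all _ fun ω => ?_
        have hd : β ω * x₀ + η ω + γ ω ≠ 0 := by
          have := hden x₀ hx₀.1 ω; linarith
        exact continuousAt_const.mul
          ((((continuous_const.mul continuous_id).add continuous_const).continuousAt).div
            ((((continuous_const.mul continuous_id).add continuous_const).add
              continuous_const).continuousAt) hd)
    intro x hx
    have hgc : ContinuousAt g x := by
      have h2 : ContinuousAt (fun x => (∫ ω, h x ω ∂μ) - x) x :=
        (hFc x hx).sub continuousAt_id
      have hg_eq : g = fun x => (∫ ω, h x ω ∂μ) - x := funext hgF
      rw [hg_eq]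
      exact h2
    exact hgc.continuousWithinAt
  -- g 0 > 0
  have hg0 : 0 < g 0 := by
    rw [hgF 0, sub_zero]
    rw [integral_pos_iff_support_of_nonneg_ae (ae_of_all _ (h0h 0 le_rfl)) (hint 0 le_rfl)]
    have hsub : {ω | 0 < η ω * f ω} ∩ {ω | 0 < q ω} ⊆ Function.support (h 0) := by
      intro ω ⟨h1, h2⟩
      simp only [Set.mem_setOf_eq] at h1 h2
      have hη' : 0 < η ω := by
        rcases (h0η ω).lt_or_eq with h | h
        · exact h
        · exfalso; rw [← h] at h1; simp at h1
      have hf' : 0 < f ω := by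
        rcases (h0f ω).lt_or_eq with h' | h'
        · exact h'
        · exfalso; rw [← h'] at h1; simp at h1
      have hd := hden 0 le_rfl ω
      have : 0 < h 0 ω := by
        show 0 < q ω * f ω * ((β ω * 0 + η ω) / (β ω * 0 + η ω + γ ω))
        have hnum : 0 < β ω * 0 + η ω := by rw [mul_zero, zero_add]; exact hη'
        exact mul_pos (mul_pos h2 hf') (div_pos hnum (lt_of_lt_of_le hε hd))
      exact fun hc => this.ne' hc
    calc 0 < μ {ω | 0 < η ω * f ω} := hηf
      _ = μ ({ω | 0 < η ω * f ω} ∩ {ω | 0 < q ω}) := by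
          refine (measure_inter_conull ?_).symm
          rw [compl_setOf]
          simpa using ae_iff.mp hqpos
      _ ≤ μ (Function.support (h 0)) := measure_mono hsub
  -- g 1 < 0
  have hg1 : g 1 < 0 := by
    rw [hgF 1, sub_neg]
    have hrpos : 0 < ∫ ω, (q ω * f ω - h 1 ω) ∂μ := by
      have hr0 : ∀ ω, 0 ≤ q ω * f ω - h 1 ω := by
        intro ω
        have := hφ1 1 zero_le_one ω
        have h2 : h 1 ω ≤ q ω * f ω * 1 :=
          mul_le_mul_of_nonneg_left this (mul_nonneg (h0q ω) (h0f ω))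
        linarith [h2, mul_one (q ω * f ω)]
      rw [integral_pos_iff_support_of_nonneg_ae (ae_of_all _ hr0) (hqfI.sub (hint 1 zero_le_one))]
      have hsupqf : 0 < μ (Function.support fun ω => q ω * f ω) := by
        rw [← integral_pos_iff_support_of_nonneg_ae
          (ae_of_all _ fun ω => mul_nonneg (h0q ω) (h0f ω)) hqfI, hqfint]
        exact one_pos
      refine lt_of_lt_of_le hsupqf (measure_mono ?_)
      intro ω hω
      have hqf : 0 < q ω * f ω :=
        lt_of_le_of_ne (mul_nonneg (h0q ω) (h0f ω)) (Ne.symm hω)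
      have hd := hden 1 zero_le_one ω
      have hφlt : (β ω * 1 + η ω) / (β ω * 1 + η ω + γ ω) < 1 := by
        rw [div_lt_one (by linarith)]
        linarith [hγε ω]
      have : 0 < q ω * f ω - h 1 ω := by
        show 0 < q ω * f ω - q ω * f ω * ((β ω * 1 + η ω) / (β ω * 1 + η ω + γ ω))
        nlinarith
      exact fun hc => this.ne' hc
    rw [integral_sub hqfI (hint 1 zero_le_one), hqfint] at hrpos
    linarith
  -- existence via IVT
  have hivt : (0:ℝ) ∈ g '' Ioo 0 1 := by
    apply intermediate_value_Ioo' zero_le_one hcont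
    exact ⟨hg1, hg0⟩
  obtain ⟨x, hxmem, hgx⟩ := hivt
  -- uniqueness from concavity
  have huniq : ∀ x1 x2 : ℝ, 0 ≤ x1 → x1 < x2 → x2 ≤ 1 → g x1 = 0 → g x2 = 0 → False := by
    intro x1 x2 hx1 hx12 hx2 hg1' hg2'
    have hx2p : 0 < x2 := lt_of_le_of_lt hx1 hx12
    set t : ℝ := x1 / x2 with ht
    have ht0 : 0 ≤ t := div_nonneg hx1 hx2p.le
    have ht1 : t < 1 := (div_lt_one hx2p).2 hx12
    have htx : t * x2 = x1 := div_mul_cancel₀ x1 hx2p.ne'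
    -- pointwise concavity
    have hkey : ∀ ω, (1 - t) * h 0 ω + t * h x2 ω ≤ h x1 ω := by
      intro ω
      have := aux_concave (β ω * 0 + η ω) (β ω * x2 + η ω) (γ ω) t
        (by rw [mul_zero, zero_add]; exact h0η ω)
        (by nlinarith [mul_nonneg (h0β ω) hx2p.le, h0η ω])
        (lt_of_lt_of_le hε (hγε ω)) ht0 ht1.le
      have heq : (1 - t) * (β ω * 0 + η ω) + t * (β ω * x2 + η ω) = β ω * x1 + η ω := by
        rw [mul_zero, zero_add, ← htx]; ring
      rw [heq] at this
      show (1 - t) * (q ω * f ω * ((β ω * 0 + η ω) / (β ω * 0 + η ω + γ ω)))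
            + t * (q ω * f ω * ((β ω * x2 + η ω) / (β ω * x2 + η ω + γ ω)))
          ≤ q ω * f ω * ((β ω * x1 + η ω) / (β ω * x1 + η ω + γ ω))
      have hqf : 0 ≤ q ω * f ω := mul_nonneg (h0q ω) (h0f ω)
      calc (1 - t) * (q ω * f ω * ((β ω * 0 + η ω) / (β ω * 0 + η ω + γ ω)))
            + t * (q ω * f ω * ((β ω * x2 + η ω) / (β ω * x2 + η ω + γ ω)))
          = q ω * f ω * ((1 - t) * ((β ω * 0 + η ω) / (β ω * 0 + η ω + γ ω))
            + t * ((β ω * x2 + η ω) / (β ω * x2 + η ω + γ ω))) := by ring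
        _ ≤ q ω * f ω * ((β ω * x1 + η ω) / (β ω * x1 + η ω + γ ω)) :=
            mul_le_mul_of_nonneg_left this hqf
    -- integrate
    have hlhsI : Integrable (fun ω => (1 - t) * h 0 ω + t * h x2 ω) μ :=
      ((hint 0 le_rfl).const_mul _).add ((hint x2 hx2p.le).const_mul _)
    have hmono : (∫ ω, ((1 - t) * h 0 ω + t * h x2 ω) ∂μ) ≤ ∫ ω, h x1 ω ∂μ :=
      integral_mono hlhsI (hint x1 hx1) hkey
    rw [integral_add ((hint 0 le_rfl).const_mul _) ((hint x2 hx2p.le).const_mul _),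
      integral_const_mul, integral_const_mul] at hmono
    have hF0 : 0 < ∫ ω, h 0 ω ∂μ := by rw [hgF 0, sub_zero] at hg0; exact hg0
    have hF1 : (∫ ω, h x1 ω ∂μ) = x1 := by
      have := hgF x1; rw [hg1'] at this; linarith
    have hF2 : (∫ ω, h x2 ω ∂μ) = x2 := by
      have := hgF x2; rw [hg2'] at this; linarith
    rw [hF1, hF2] at hmono
    nlinarith
  refine ⟨x, hxmem, hgx, fun y hy hgy => ?_⟩
  by_contra hne
  rcases lt_or_gt_of_ne hne with hlt | hgt
  · exact huniq y x hy.1 hlt hxmem.2.le hgy hgx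
  · exact huniq x y hxmem.1.le hgt hy.2 hgx hgy
end

section
/- If η(ω)f(ω) = 0 for μ-a.e. ω, then the function g : [0,1] → ℝ defined by g(x) = ∫_Ω q(ω) f(ω) (β(ω)x + η(ω))/(β(ω)x + η(ω) + γ(ω)) dμ(ω) − x satisfies g(0) = 0 and is differentiable at 0 with g'(0) = R₀ − 1, where R₀ = ∫_Ω q(ω) f(ω) β(ω)/γ(ω) dμ(ω). -/
open MeasureTheory Filter Set Topology

/-- If `η f = 0` a.e. then `g(0) = 0` and `g` is differentiable at `0` (within
`[0,1]`) with derivative `R₀ − 1`. -/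
theorem stmt_4
    {Ω : Type*} [MeasurableSpace Ω] (μ : Measure Ω) [IsProbabilityMeasure μ]
    (q β γ η f : Ω → ℝ)
    (hmq : Measurable q) (hmβ : Measurable β) (hmγ : Measurable γ)
    (hmη : Measurable η) (hmf : Measurable f)
    (h0q : ∀ ω, 0 ≤ q ω) (h0β : ∀ ω, 0 ≤ β ω) (h0γ : ∀ ω, 0 ≤ γ ω)
    (h0η : ∀ ω, 0 ≤ η ω) (h0f : ∀ ω, 0 ≤ f ω)
    (M : ℝ) (hbq : ∀ ω, q ω ≤ M) (hbβ : ∀ ω, β ω ≤ M) (hbγ : ∀ ω, γ ω ≤ M)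
    (hbη : ∀ ω, η ω ≤ M) (hbf : ∀ ω, f ω ≤ M)
    (hfint : ∫ ω, f ω ∂μ = 1) (hqfint : ∫ ω, q ω * f ω ∂μ = 1)
    (hqpos : ∀ᵐ ω ∂μ, 0 < q ω)
    (ε : ℝ) (hε : 0 < ε) (hβε : ∀ ω, ε ≤ β ω) (hγε : ∀ ω, ε ≤ γ ω)
    (g : ℝ → ℝ)
    (hgdef : ∀ x, g x =
      (∫ ω, q ω * f ω * ((β ω * x + η ω) / (β ω * x + η ω + γ ω)) ∂μ) - x)
    (hηf : ∀ᵐ ω ∂μ, η ω * f ω = 0)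
    (R₀ : ℝ) (hR₀ : R₀ = ∫ ω, q ω * f ω * (β ω / γ ω) ∂μ) :
    g 0 = 0 ∧ HasDerivWithinAt g (R₀ - 1) (Icc (0:ℝ) 1) 0 := by

  set F : ℝ → ℝ := fun x => ∫ ω, q ω * f ω * (β ω / (β ω * x + γ ω)) ∂μ with hF
  -- g x = x * F x - x for all x
  have hgx : ∀ x, g x = x * F x - x := by
    intro x
    rw [hgdef, hF]
    have hcongr : (∫ ω, q ω * f ω * ((β ω * x + η ω) / (β ω * x + η ω + γ ω)) ∂μ)
        = ∫ ω, x * (q ω * f ω * (β ω / (β ω * x + γ ω))) ∂μ := by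
      refine integral_congr_ae ?_
      filter_upwards [hηf] with ω hω
      rcases mul_eq_zero.mp hω with h | h
      · rw [h]
        simp only [add_zero]
        rw [mul_comm (β ω) x, mul_div_assoc]
        ring
      · simp [h]
    rw [hcongr, integral_const_mul]
  have hg0 : g 0 = 0 := by rw [hgx]; ring
  -- continuity of F within Icc at 0
  have hFcont : ContinuousWithinAt F (Icc (0:ℝ) 1) 0 := by
    apply continuousWithinAt_of_dominated (bound := fun _ => M * M * (M / ε))
    · filter_upwards with x
      exact ((hmq.mul hmf).mul (hmβ.div ((hmβ.mul_const x).add hmγ))).aestronglyMeasurable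
    · filter_upwards [self_mem_nhdsWithin] with x hx
      filter_upwards with ω
      have hx0 : 0 ≤ x := hx.1
      have hd : ε ≤ β ω * x + γ ω := by
        have : 0 ≤ β ω * x := mul_nonneg (h0β ω) hx0
        linarith [hγε ω]
      have hM0 : (0:ℝ) ≤ M := le_trans (h0β ω) (hbβ ω)
      have h1 : β ω / (β ω * x + γ ω) ≤ M / ε := div_le_div₀ hM0 (hbβ ω) hε hd
      have h2 : 0 ≤ β ω / (β ω * x + γ ω) := div_nonneg (h0β ω) (le_trans hε.le hd)
      rw [Real.norm_eq_abs, abs_of_nonneg (mul_nonneg (mul_nonneg (h0q ω) (h0f ω)) h2)]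
      have := mul_le_mul (mul_le_mul (hbq ω) (hbf ω) (h0f ω) hM0) h1 h2
        (by positivity)
      exact this
    · exact integrable_const _
    · filter_upwards with ω
      have hd : Continuous (fun x : ℝ => β ω * x + γ ω) := by continuity
      have hne : β ω * (0:ℝ) + γ ω ≠ 0 := by
        have := hγε ω; simp only [mul_zero, zero_add]; linarith
      exact continuousWithinAt_const.mul
        (continuousWithinAt_const.div hd.continuousWithinAt hne)
  have hF0 : F 0 = R₀ := by
    rw [hF, hR₀]; simp
  refine ⟨hg0, ?_⟩
  rw [hasDerivWithinAt_iff_tendsto_slope]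
  have htend : Tendsto (fun x => F x - 1) (𝓝[Icc (0:ℝ) 1 \ {0}] 0) (𝓝 (R₀ - 1)) := by
    have h1 : Tendsto F (𝓝[Icc (0:ℝ) 1 \ {0}] 0) (𝓝 R₀) := by
      rw [← hF0]
      exact hFcont.mono_left (nhdsWithin_mono _ diff_subset)
    exact h1.sub tendsto_const_nhds
  refine htend.congr' ?_
  filter_upwards [self_mem_nhdsWithin] with x hx
  have hx0 : x ≠ 0 := hx.2
  rw [slope_def_field, hgx, hg0]
  field_simp
  ring
end

section
/- If η(ω)f(ω) = 0 for μ-a.e. ω and R₀ ≤ 1, where R₀ = ∫_Ω q(ω) f(ω) β(ω)/γ(ω) dμ(ω), then x = 0 is the unique root in [0,1] of the function g(x) = ∫_Ω q(ω) f(ω) (β(ω)x + η(ω))/(β(ω)x + η(ω) + γ(ω)) dμ(ω) − x. -/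
open MeasureTheory Filter Set Topology

/-- If `η f = 0` a.e. and `R₀ ≤ 1` then `x = 0` is the unique root of `g` in `[0,1]`. -/
theorem stmt_5
    {Ω : Type*} [MeasurableSpace Ω] (μ : Measure Ω) [IsProbabilityMeasure μ]
    (q β γ η f : Ω → ℝ)
    (hmq : Measurable q) (hmβ : Measurable β) (hmγ : Measurable γ)
    (hmη : Measurable η) (hmf : Measurable f)
    (h0q : ∀ ω, 0 ≤ q ω) (h0β : ∀ ω, 0 ≤ β ω) (h0γ : ∀ ω, 0 ≤ γ ω)
    (h0η : ∀ ω, 0 ≤ η ω) (h0f : ∀ ω, 0 ≤ f ω)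
    (M : ℝ) (hbq : ∀ ω, q ω ≤ M) (hbβ : ∀ ω, β ω ≤ M) (hbγ : ∀ ω, γ ω ≤ M)
    (hbη : ∀ ω, η ω ≤ M) (hbf : ∀ ω, f ω ≤ M)
    (hfint : ∫ ω, f ω ∂μ = 1) (hqfint : ∫ ω, q ω * f ω ∂μ = 1)
    (hqpos : ∀ᵐ ω ∂μ, 0 < q ω)
    (ε : ℝ) (hε : 0 < ε) (hβε : ∀ ω, ε ≤ β ω) (hγε : ∀ ω, ε ≤ γ ω)
    (g : ℝ → ℝ)
    (hgdef : ∀ x, g x =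
      (∫ ω, q ω * f ω * ((β ω * x + η ω) / (β ω * x + η ω + γ ω)) ∂μ) - x)
    (hηf : ∀ᵐ ω ∂μ, η ω * f ω = 0)
    (R₀ : ℝ) (hR₀ : R₀ = ∫ ω, q ω * f ω * (β ω / γ ω) ∂μ) (hR₀le : R₀ ≤ 1) :
    ∀ x ∈ Icc (0:ℝ) 1, (g x = 0 ↔ x = 0) := by
  have hγpos : ∀ ω, (0:ℝ) < γ ω := fun ω => lt_of_lt_of_le hε (hγε ω)
  have hne : Nonempty Ω := by
    by_contra hc
    rw [not_nonempty_iff] at hc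
    have h1 : μ Set.univ = 1 := measure_univ
    rw [Set.univ_eq_empty_iff.mpr hc] at h1
    simp at h1
  obtain ⟨ω₀⟩ := hne
  have hεM : ε ≤ M := le_trans (hβε ω₀) (hbβ ω₀)
  have hM0 : (0:ℝ) ≤ M := le_trans hε.le hεM
  have key_int : ∀ (h : Ω → ℝ) (C : ℝ), Measurable h → (∀ ω, ‖h ω‖ ≤ C) →
      Integrable h μ := fun h C hm hb =>
    (integrable_const C).mono' hm.aestronglyMeasurable (ae_of_all _ hb)
  intro x hx
  rcases eq_or_lt_of_le hx.1 with h0 | hxpos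
  · -- x = 0 case
    subst h0
    have hae0 : (fun ω => q ω * f ω * ((β ω * 0 + η ω) / (β ω * 0 + η ω + γ ω)))
        =ᵐ[μ] (fun _ => (0:ℝ)) := by
      filter_upwards [hηf] with ω hω
      rcases mul_eq_zero.1 hω with h | h
      · simp [h]
      · simp [h]
    have : g 0 = 0 := by
      rw [hgdef 0, integral_congr_ae hae0, integral_zero]; ring
    simp [this]
  · -- x > 0 case: show g x < 0
    have hqf_nonneg : ∀ ω, (0:ℝ) ≤ q ω * f ω := fun ω => mul_nonneg (h0q ω) (h0f ω)
    have hqf_le : ∀ ω, q ω * f ω ≤ M * M := fun ω =>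
      mul_le_mul (hbq ω) (hbf ω) (h0f ω) hM0
    have hden_pos : ∀ ω, (0:ℝ) < β ω * x + γ ω := fun ω =>
      add_pos_of_nonneg_of_pos (mul_nonneg (h0β ω) hx.1) (hγpos ω)
    have hβx_pos : ∀ ω, (0:ℝ) < β ω * x := fun ω =>
      mul_pos (lt_of_lt_of_le hε (hβε ω)) hxpos
    -- a.e. rewrite of the integrand
    have hae1 : (fun ω => q ω * f ω * ((β ω * x + η ω) / (β ω * x + η ω + γ ω)))
        =ᵐ[μ] (fun ω => q ω * f ω * (β ω * x / (β ω * x + γ ω))) := by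
      filter_upwards [hηf] with ω hω
      rcases mul_eq_zero.1 hω with h | h
      · simp [h]
      · simp [h]
    set h1 : Ω → ℝ := fun ω => q ω * f ω * (β ω * x / (β ω * x + γ ω)) with hh1
    set h2 : Ω → ℝ := fun ω => q ω * f ω * (β ω / γ ω) * x with hh2
    have hint1 : Integrable h1 μ := by
      apply key_int _ (M * M)
      · exact ((hmq.mul hmf).mul ((hmβ.mul measurable_const).div
          ((hmβ.mul measurable_const).add hmγ)))
      · intro ω
        have hr0 : (0:ℝ) ≤ β ω * x / (β ω * x + γ ω) :=
          div_nonneg (hβx_pos ω).le (hden_pos ω).le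
        have hr1 : β ω * x / (β ω * x + γ ω) ≤ 1 := by
          rw [div_le_one (hden_pos ω)]
          linarith [(hγpos ω)]
        rw [Real.norm_eq_abs, abs_of_nonneg (mul_nonneg (hqf_nonneg ω) hr0)]
        calc q ω * f ω * (β ω * x / (β ω * x + γ ω)) ≤ M * M * 1 := by
              apply mul_le_mul (hqf_le ω) hr1 hr0 (by positivity)
          _ = M * M := by ring
    have hint2 : Integrable h2 μ := by
      apply key_int _ (M * M * (M / ε) * 1)
      · exact ((hmq.mul hmf).mul (hmβ.div hmγ)).mul measurable_const
      · intro ω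
        have hr : β ω / γ ω ≤ M / ε := div_le_div₀ hM0 (hbβ ω) hε (hγε ω)
        have hr0 : (0:ℝ) ≤ β ω / γ ω := div_nonneg (h0β ω) (h0γ ω)
        rw [Real.norm_eq_abs,
          abs_of_nonneg (mul_nonneg (mul_nonneg (hqf_nonneg ω) hr0) hx.1)]
        apply mul_le_mul _ hx.2 hx.1 (by positivity)
        exact mul_le_mul (hqf_le ω) hr hr0 (by positivity)
    have hd_nonneg : ∀ ω, 0 ≤ h2 ω - h1 ω := by
      intro ω
      have hle : β ω * x / (β ω * x + γ ω) ≤ β ω * x / γ ω :=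
        div_le_div_of_nonneg_left (hβx_pos ω).le (hγpos ω)
          (by linarith [hβx_pos ω])
      have h2eq : h2 ω = q ω * f ω * (β ω * x / γ ω) := by
        simp only [hh2]; ring
      rw [h2eq]
      simp only [hh1]
      have := mul_le_mul_of_nonneg_left hle (hqf_nonneg ω)
      linarith
    -- ∫ (h2 - h1) > 0
    have hdpos : 0 < ∫ ω, (h2 ω - h1 ω) ∂μ := by
      rcases lt_or_eq_of_le (integral_nonneg (f := fun ω => h2 ω - h1 ω) hd_nonneg) with h | h
      · exact h
      · exfalso
        have hdint : Integrable (fun ω => h2 ω - h1 ω) μ := hint2.sub hint1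
        have hzero : (fun ω => h2 ω - h1 ω) =ᵐ[μ] 0 :=
          (integral_eq_zero_iff_of_nonneg hd_nonneg hdint).1 h.symm
        have hqf0 : (fun ω => q ω * f ω) =ᵐ[μ] (fun _ => (0:ℝ)) := by
          filter_upwards [hzero] with ω hω
          simp only [Pi.zero_apply] at hω
          have hlt : β ω * x / (β ω * x + γ ω) < β ω * x / γ ω :=
            div_lt_div_of_pos_left (hβx_pos ω) (hγpos ω) (by linarith [hβx_pos ω])
          have h2eq : h2 ω = q ω * f ω * (β ω * x / γ ω) := by
            simp only [hh2]; ring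
          rw [h2eq, hh1] at hω
          by_contra hne
          have hqfpos : 0 < q ω * f ω :=
            lt_of_le_of_ne (hqf_nonneg ω) (Ne.symm hne)
          nlinarith [mul_lt_mul_of_pos_left hlt hqfpos]
        have : (1:ℝ) = 0 := by
          rw [← hqfint, integral_congr_ae hqf0, integral_zero]
        norm_num at this
    have hsub : ∫ ω, (h2 ω - h1 ω) ∂μ = (∫ ω, h2 ω ∂μ) - ∫ ω, h1 ω ∂μ :=
      integral_sub hint2 hint1
    have hI2 : ∫ ω, h2 ω ∂μ = R₀ * x := by
      rw [hR₀]
      exact integral_mul_const x (fun ω => q ω * f ω * (β ω / γ ω))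
    have hgx : g x < 0 := by
      rw [hgdef x, integral_congr_ae hae1]
      have : (∫ ω, h1 ω ∂μ) < R₀ * x := by
        rw [← hI2]; linarith [hdpos, hsub]
      have hRx : R₀ * x ≤ x := by
        calc R₀ * x ≤ 1 * x := mul_le_mul_of_nonneg_right hR₀le hxpos.le
          _ = x := one_mul x
      have : (∫ ω, h1 ω ∂μ) < x := lt_of_lt_of_le this hRx
      linarith
    constructor
    · intro h; exact absurd h (ne_of_lt hgx)
    · intro h; exact absurd h hxpos.ne'
end

section
/- If η(ω)f(ω) = 0 for μ-a.e. ω and R₀ > 1, where R₀ = ∫_Ω q(ω) f(ω) β(ω)/γ(ω) dμ(ω), then the function g(x) = ∫_Ω q(ω) f(ω) (β(ω)x + η(ω))/(β(ω)x + η(ω) + γ(ω)) dμ(ω) − x has exactly two roots in [0,1]: the root x = 0 and exactly one root in the open interval (0,1). -/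
open MeasureTheory Filter Set Topology

/-- If `η f = 0` a.e. and `R₀ > 1` then `g` has exactly two roots in `[0,1]`:
the root `0` and exactly one root in `(0,1)`. -/
theorem stmt_6
    {Ω : Type*} [MeasurableSpace Ω] (μ : Measure Ω) [IsProbabilityMeasure μ]
    (q β γ η f : Ω → ℝ)
    (hmq : Measurable q) (hmβ : Measurable β) (hmγ : Measurable γ)
    (hmη : Measurable η) (hmf : Measurable f)
    (h0q : ∀ ω, 0 ≤ q ω) (h0β : ∀ ω, 0 ≤ β ω) (h0γ : ∀ ω, 0 ≤ γ ω)
    (h0η : ∀ ω, 0 ≤ η ω) (h0f : ∀ ω, 0 ≤ f ω)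
    (M : ℝ) (hbq : ∀ ω, q ω ≤ M) (hbβ : ∀ ω, β ω ≤ M) (hbγ : ∀ ω, γ ω ≤ M)
    (hbη : ∀ ω, η ω ≤ M) (hbf : ∀ ω, f ω ≤ M)
    (hfint : ∫ ω, f ω ∂μ = 1) (hqfint : ∫ ω, q ω * f ω ∂μ = 1)
    (hqpos : ∀ᵐ ω ∂μ, 0 < q ω)
    (ε : ℝ) (hε : 0 < ε) (hβε : ∀ ω, ε ≤ β ω) (hγε : ∀ ω, ε ≤ γ ω)
    (g : ℝ → ℝ)
    (hgdef : ∀ x, g x =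
      (∫ ω, q ω * f ω * ((β ω * x + η ω) / (β ω * x + η ω + γ ω)) ∂μ) - x)
    (hηf : ∀ᵐ ω ∂μ, η ω * f ω = 0)
    (R₀ : ℝ) (hR₀ : R₀ = ∫ ω, q ω * f ω * (β ω / γ ω) ∂μ) (hR₀gt : 1 < R₀) :
    g 0 = 0 ∧
    ∃ x ∈ Ioo (0:ℝ) 1, g x = 0 ∧
      ∀ y ∈ Icc (0:ℝ) 1, g y = 0 → y = 0 ∨ y = x := by
  have hne : Nonempty Ω := by
    by_contra h
    rw [not_nonempty_iff] at h
    have h1 : μ Set.univ = 1 := measure_univ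
    rw [Set.univ_eq_empty_iff.mpr h, measure_empty] at h1
    exact zero_ne_one h1
  obtain ⟨ω₀⟩ := hne
  have hM : 0 < M := lt_of_lt_of_le hε ((hβε ω₀).trans (hbβ ω₀))
  set F : ℝ → Ω → ℝ := fun x ω => q ω * f ω * (β ω / (β ω * x + γ ω)) with hF
  set H : ℝ → ℝ := fun x => ∫ ω, F x ω ∂μ with hHdef
  have hden : ∀ x : ℝ, 0 ≤ x → ∀ ω, 0 < β ω * x + γ ω := fun x hx ω =>
    add_pos_of_nonneg_of_pos (mul_nonneg (h0β ω) hx) (hε.trans_le (hγε ω))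
  have hFnn : ∀ x : ℝ, 0 ≤ x → ∀ ω, 0 ≤ F x ω := fun x hx ω =>
    mul_nonneg (mul_nonneg (h0q ω) (h0f ω)) (div_nonneg (h0β ω) (hden x hx ω).le)
  have hFle : ∀ x : ℝ, 0 ≤ x → ∀ ω, F x ω ≤ M * M * (M / ε) := by
    intro x hx ω
    have h1 : β ω / (β ω * x + γ ω) ≤ M / ε := by
      apply div_le_div₀ (le_of_lt hM) (hbβ ω) hε
      calc ε ≤ γ ω := hγε ω
        _ ≤ β ω * x + γ ω := le_add_of_nonneg_left (mul_nonneg (h0β ω) hx)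
    calc F x ω ≤ M * M * (β ω / (β ω * x + γ ω)) := by
          apply mul_le_mul_of_nonneg_right _ (div_nonneg (h0β ω) (hden x hx ω).le)
          exact mul_le_mul (hbq ω) (hbf ω) (h0f ω) hM.le
      _ ≤ M * M * (M / ε) := by
          apply mul_le_mul_of_nonneg_left h1 (by positivity)
  have hmeasF : ∀ x : ℝ, Measurable (F x) :=
    fun x => ((hmq.mul hmf).mul (hmβ.div ((hmβ.mul measurable_const).add hmγ)))
  have hintF : ∀ x : ℝ, 0 ≤ x → Integrable (F x) μ := by
    intro x hx
    refine ⟨(hmeasF x).aestronglyMeasurable, HasFiniteIntegral.of_bounded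
      (C := M * M * (M / ε)) (Eventually.of_forall fun ω => ?_)⟩
    rw [Real.norm_eq_abs, abs_of_nonneg (hFnn x hx ω)]
    exact hFle x hx ω
  have hintqf : Integrable (fun ω => q ω * f ω) μ := by
    refine ⟨(hmq.mul hmf).aestronglyMeasurable, HasFiniteIntegral.of_bounded
      (C := M * M) (Eventually.of_forall fun ω => ?_)⟩
    rw [Real.norm_eq_abs, abs_of_nonneg (mul_nonneg (h0q ω) (h0f ω))]
    exact mul_le_mul (hbq ω) (hbf ω) (h0f ω) hM.le
  -- the set where q f > 0 has positive measure
  have hSpos : 0 < μ {ω | 0 < q ω * f ω} := by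
    by_contra h
    push_neg at h
    have h0 : μ {ω | 0 < q ω * f ω} = 0 := le_antisymm h zero_le
    have hae : (fun ω => q ω * f ω) =ᵐ[μ] 0 := by
      rw [Filter.EventuallyEq, ae_iff]
      convert h0 using 2
      ext ω
      simp only [Pi.zero_apply, Set.mem_setOf_eq]
      constructor
      · intro hne; exact lt_of_le_of_ne (mul_nonneg (h0q ω) (h0f ω)) (Ne.symm hne)
      · intro hlt; exact ne_of_gt hlt
    have h1 : (1:ℝ) = 0 := by rw [← hqfint, integral_congr_ae hae]; simp
    exact one_ne_zero h1
  -- H is strictly decreasing on [0,1]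
  have hanti : StrictAntiOn H (Icc (0:ℝ) 1) := by
    intro a ha b hb hab
    have hint_a := hintF a ha.1
    have hint_b := hintF b hb.1
    have hpos : 0 < ∫ ω, (F a ω - F b ω) ∂μ := by
      rw [integral_pos_iff_support_of_nonneg_ae]
      · refine lt_of_lt_of_le hSpos (measure_mono ?_)
        intro ω hω
        simp only [Set.mem_setOf_eq] at hω
        simp only [Function.mem_support]
        have hβpos : 0 < β ω := hε.trans_le (hβε ω)
        have hd1 := hden a ha.1 ω
        have hd2 := hden b hb.1 ω
        have : β ω / (β ω * b + γ ω) < β ω / (β ω * a + γ ω) := by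
          apply div_lt_div_of_pos_left hβpos hd1
          have : β ω * a < β ω * b := by nlinarith
          linarith
        have : F b ω < F a ω := by
          apply mul_lt_mul_of_pos_left this hω
        exact ne_of_gt (sub_pos.mpr this)
      · refine Eventually.of_forall fun ω => ?_
        simp only [Pi.zero_apply]
        have hd1 := hden a ha.1 ω
        have hd2 := hden b hb.1 ω
        have : β ω / (β ω * b + γ ω) ≤ β ω / (β ω * a + γ ω) := by
          apply div_le_div_of_nonneg_left (h0β ω) hd1
          have : β ω * a ≤ β ω * b := by nlinarith [h0β ω]
          linarith
        have := mul_le_mul_of_nonneg_left this (mul_nonneg (h0q ω) (h0f ω))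
        simpa [F, sub_nonneg] using this
      · exact hint_a.sub hint_b
    rw [integral_sub hint_a hint_b] at hpos
    simpa [hHdef, sub_pos] using hpos
  -- H 0 = R₀
  have hH0 : H 0 = R₀ := by
    rw [hHdef, hR₀]
    simp [F]
  -- H 1 < 1
  have hH1 : H 1 < 1 := by
    have hpos : 0 < ∫ ω, (q ω * f ω - F 1 ω) ∂μ := by
      rw [integral_pos_iff_support_of_nonneg_ae]
      · refine lt_of_lt_of_le hSpos (measure_mono ?_)
        intro ω hω
        simp only [Set.mem_setOf_eq] at hω
        simp only [Function.mem_support]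
        have hd := hden 1 zero_le_one ω
        have hβγ : β ω / (β ω * 1 + γ ω) < 1 := by
          rw [div_lt_one hd]
          have := hε.trans_le (hγε ω)
          linarith
        have : F 1 ω < q ω * f ω * 1 := mul_lt_mul_of_pos_left hβγ hω
        rw [mul_one] at this
        exact ne_of_gt (sub_pos.mpr this)
      · refine Eventually.of_forall fun ω => ?_
        simp only [Pi.zero_apply]
        have hd := hden 1 zero_le_one ω
        have hβγ : β ω / (β ω * 1 + γ ω) ≤ 1 := by
          rw [div_le_one hd]
          have := hε.trans_le (hγε ω)
          linarith
        have := mul_le_mul_of_nonneg_left hβγ (mul_nonneg (h0q ω) (h0f ω))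
        simpa [F, sub_nonneg] using this
      · exact hintqf.sub (hintF 1 zero_le_one)
    rw [integral_sub hintqf (hintF 1 zero_le_one), hqfint] at hpos
    simpa [hHdef, sub_pos] using hpos
  -- H is continuous on [0,1]
  have hcont : ContinuousOn H (Icc (0:ℝ) 1) := by
    intro x₀ hx₀
    apply ContinuousAt.continuousWithinAt
    set δ : ℝ := ε / (2 * M) with hδ
    have hδpos : 0 < δ := by positivity
    have hnb : ∀ᶠ x in 𝓝 x₀, -δ < x := eventually_gt_nhds (by linarith [hx₀.1])
    apply continuousAt_of_dominated (bound := fun _ => M * M * (M / (ε/2)))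
    · exact Eventually.of_forall fun x => (hmeasF x).aestronglyMeasurable
    · filter_upwards [hnb] with x hx
      refine Eventually.of_forall fun ω => ?_
      have hd : ε / 2 ≤ β ω * x + γ ω := by
        have h1 : β ω * x ≥ -(M * δ) := by
          rcases le_or_gt 0 x with h | h
          · nlinarith [mul_nonneg (h0β ω) h, hM]
          · have : β ω * x ≥ M * x := by nlinarith [hbβ ω, h0β ω]
            have : M * x ≥ -(M * δ) := by nlinarith
            linarith [mul_le_mul_of_nonneg_left (le_of_lt hx) (h0β ω)]
        have h2 : M * δ = ε / 2 := by
          rw [hδ]; field_simp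
        have := hγε ω
        nlinarith
      have hdpos : 0 < β ω * x + γ ω := lt_of_lt_of_le (by positivity) hd
      rw [Real.norm_eq_abs, abs_of_nonneg (mul_nonneg (mul_nonneg (h0q ω) (h0f ω))
        (div_nonneg (h0β ω) hdpos.le))]
      calc q ω * f ω * (β ω / (β ω * x + γ ω)) ≤ M * M * (β ω / (β ω * x + γ ω)) := by
            apply mul_le_mul_of_nonneg_right _ (div_nonneg (h0β ω) hdpos.le)
            exact mul_le_mul (hbq ω) (hbf ω) (h0f ω) hM.le
        _ ≤ M * M * (M / (ε/2)) := by
            apply mul_le_mul_of_nonneg_left _ (by positivity)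
            exact div_le_div₀ hM.le (hbβ ω) (by positivity) hd
    · refine ⟨aestronglyMeasurable_const, HasFiniteIntegral.of_bounded
        (C := M * M * (M / (ε/2))) (Eventually.of_forall fun ω => ?_)⟩
      rw [Real.norm_eq_abs, abs_of_nonneg (by positivity)]
    · refine Eventually.of_forall fun ω => ?_
      have hd : 0 < β ω * x₀ + γ ω := hden x₀ hx₀.1 ω
      exact (continuousAt_const.mul (ContinuousAt.div continuousAt_const
        (((continuous_const.mul continuous_id).add continuous_const).continuousAt) hd.ne'))
  -- The formula for g on [0,∞)
  have hgform : ∀ x : ℝ, 0 ≤ x → g x = x * H x - x := by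
    intro x hx
    rw [hgdef x]
    congr 1
    have hcong : (fun ω => q ω * f ω * ((β ω * x + η ω) / (β ω * x + η ω + γ ω)))
        =ᵐ[μ] fun ω => x * F x ω := by
      filter_upwards [hηf] with ω hω
      rcases mul_eq_zero.mp hω with hη0 | hf0
      · rw [hη0]
        have hd := hden x hx ω
        field_simp [F]
        ring
      · simp [F, hf0]
    rw [integral_congr_ae hcong, integral_const_mul]
  have hg0 : g 0 = 0 := by
    rw [hgform 0 le_rfl]; ring
  refine ⟨hg0, ?_⟩
  -- find the root via IVT
  have h1mem : (1:ℝ) ∈ Icc (H 1) (H 0) := ⟨hH1.le, by rw [hH0]; exact hR₀gt.le⟩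
  obtain ⟨x, hxmem, hHx⟩ := intermediate_value_Icc' zero_le_one hcont h1mem
  have hx0 : x ≠ 0 := by
    intro h
    rw [h, hH0] at hHx
    exact absurd hHx (ne_of_gt hR₀gt)
  have hx1 : x ≠ 1 := by
    intro h
    rw [h] at hHx
    exact absurd hHx (ne_of_lt hH1)
  have hxIoo : x ∈ Ioo (0:ℝ) 1 :=
    ⟨lt_of_le_of_ne hxmem.1 (Ne.symm hx0), lt_of_le_of_ne hxmem.2 hx1⟩
  refine ⟨x, hxIoo, ?_, ?_⟩
  · rw [hgform x hxmem.1, hHx]; ring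
  · intro y hy hgy
    rcases eq_or_ne y 0 with h | h
    · exact Or.inl h
    · right
      have hy0 : 0 < y := lt_of_le_of_ne hy.1 (Ne.symm h)
      rw [hgform y hy.1] at hgy
      have hHy : H y = 1 := by
        have : y * (H y - 1) = 0 := by ring_nf; linarith [hgy]
        rcases mul_eq_zero.mp this with h' | h'
        · exact absurd h' (ne_of_gt hy0)
        · linarith [h']
      exact hanti.injOn hy hxmem (by rw [hHy, hHx])
end

section
/- (i) If Î is a steady state of the heterogeneous SIS model and Ĵ = ∫_Ω q Î dμ, then Ĵ ∈ [0,1], g(Ĵ) = 0, and Î(ω) = h(Ĵ, ω) for every ω ∈ Ω. (ii) Conversely, if x ∈ [0,1] satisfies g(x) = 0, then the function Î(ω) := h(x, ω) is a steady state with ∫_Ω q Î dμ = x. -/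
open MeasureTheory Filter Set Topology

lemma integrable_bdd' {Ω : Type*} [MeasurableSpace Ω] (μ : Measure Ω)
    [IsFiniteMeasure μ] {f : Ω → ℝ} (hm : Measurable f) (C : ℝ)
    (hb : ∀ ω, |f ω| ≤ C) : Integrable f μ :=
  ⟨hm.aestronglyMeasurable,
    HasFiniteIntegral.of_bounded (C := C) (ae_of_all _ hb)⟩

/-- Characterization of steady states: (i) every steady state `Î` has
`Ĵ = ∫ q Î ∈ [0,1]`, `g(Ĵ) = 0` and `Î(ω) = h(Ĵ,ω)`; (ii) conversely every root
`x ∈ [0,1]` of `g` gives the steady state `Î = h(x,·)` with `∫ q Î = x`. -/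
theorem stmt_7
    {Ω : Type*} [MeasurableSpace Ω] (μ : Measure Ω) [IsProbabilityMeasure μ]
    (q β γ η f : Ω → ℝ)
    (hmq : Measurable q) (hmβ : Measurable β) (hmγ : Measurable γ)
    (hmη : Measurable η) (hmf : Measurable f)
    (h0q : ∀ ω, 0 ≤ q ω) (h0β : ∀ ω, 0 ≤ β ω) (h0γ : ∀ ω, 0 ≤ γ ω)
    (h0η : ∀ ω, 0 ≤ η ω) (h0f : ∀ ω, 0 ≤ f ω)
    (M : ℝ) (hbq : ∀ ω, q ω ≤ M) (hbβ : ∀ ω, β ω ≤ M) (hbγ : ∀ ω, γ ω ≤ M)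
    (hbη : ∀ ω, η ω ≤ M) (hbf : ∀ ω, f ω ≤ M)
    (hfint : ∫ ω, f ω ∂μ = 1) (hqfint : ∫ ω, q ω * f ω ∂μ = 1)
    (hqpos : ∀ᵐ ω ∂μ, 0 < q ω)
    (ε : ℝ) (hε : 0 < ε) (hβε : ∀ ω, ε ≤ β ω) (hγε : ∀ ω, ε ≤ γ ω)
    (g : ℝ → ℝ)
    (hgdef : ∀ x, g x =
      (∫ ω, q ω * f ω * ((β ω * x + η ω) / (β ω * x + η ω + γ ω)) ∂μ) - x)
    (h : ℝ → Ω → ℝ)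
    (hhdef : ∀ x ω, h x ω = f ω * ((β ω * x + η ω) / (β ω * x + η ω + γ ω))) :
    (∀ Ihat : Ω → ℝ, Measurable Ihat →
      (∀ ω, 0 ≤ Ihat ω) → (∀ ω, Ihat ω ≤ f ω) →
      (∀ ω, (β ω * (∫ ω', q ω' * Ihat ω' ∂μ) + η ω) * f ω =
            (β ω * (∫ ω', q ω' * Ihat ω' ∂μ) + η ω + γ ω) * Ihat ω) →
      ((∫ ω', q ω' * Ihat ω' ∂μ) ∈ Icc (0:ℝ) 1 ∧
       g (∫ ω', q ω' * Ihat ω' ∂μ) = 0 ∧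
       ∀ ω, Ihat ω = h (∫ ω', q ω' * Ihat ω' ∂μ) ω)) ∧
    (∀ x ∈ Icc (0:ℝ) 1, g x = 0 →
      (Measurable (fun ω => h x ω) ∧
       (∀ ω, 0 ≤ h x ω) ∧ (∀ ω, h x ω ≤ f ω) ∧
       (∫ ω, q ω * h x ω ∂μ) = x ∧
       (∀ ω, (β ω * (∫ ω', q ω' * h x ω' ∂μ) + η ω) * f ω =
             (β ω * (∫ ω', q ω' * h x ω' ∂μ) + η ω + γ ω) * h x ω))) := by
  have hne : Nonempty Ω := by
    by_contra hn
    rw [not_nonempty_iff] at hn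
    have h1 : μ Set.univ = 1 := measure_univ
    rw [Set.univ_eq_empty_iff.mpr hn] at h1
    simp at h1
  obtain ⟨ω0⟩ := hne
  have hM : 0 ≤ M := (h0q ω0).trans (hbq ω0)
  have hD : ∀ x : ℝ, 0 ≤ x → ∀ ω, 0 < β ω * x + η ω + γ ω := by
    intro x hx ω
    have h1 := mul_nonneg (h0β ω) hx
    have h2 := h0η ω
    have h3 := hγε ω
    linarith
  have hint2 : Integrable (fun ω => q ω * f ω) μ := by
    refine integrable_bdd' μ (hmq.mul hmf) (M * M) fun ω => ?_
    rw [abs_of_nonneg (mul_nonneg (h0q ω) (h0f ω))]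
    exact mul_le_mul (hbq ω) (hbf ω) (h0f ω) hM
  constructor
  · intro Ihat hmI h0I hIf heq
    set J := ∫ ω', q ω' * Ihat ω' ∂μ with hJdef
    have hint1 : Integrable (fun ω => q ω * Ihat ω) μ := by
      refine integrable_bdd' μ (hmq.mul hmI) (M * M) fun ω => ?_
      rw [abs_of_nonneg (mul_nonneg (h0q ω) (h0I ω))]
      exact mul_le_mul (hbq ω) ((hIf ω).trans (hbf ω)) (h0I ω) hM
    have hJ0 : 0 ≤ J :=
      integral_nonneg fun ω => mul_nonneg (h0q ω) (h0I ω)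
    have hJ1 : J ≤ 1 := by
      rw [hJdef, ← hqfint]
      exact integral_mono hint1 hint2 fun ω =>
        mul_le_mul_of_nonneg_left (hIf ω) (h0q ω)
    have hIh : ∀ ω, Ihat ω = h J ω := by
      intro ω
      have hD' := hD J hJ0 ω
      have hI : Ihat ω = (β ω * J + η ω) * f ω / (β ω * J + η ω + γ ω) := by
        rw [eq_div_iff hD'.ne']
        linarith [heq ω]
      rw [hI, hhdef]
      ring
    refine ⟨⟨hJ0, hJ1⟩, ?_, hIh⟩
    rw [hgdef]
    have hcong : ∫ ω, q ω * f ω * ((β ω * J + η ω) / (β ω * J + η ω + γ ω)) ∂μ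
        = ∫ ω', q ω' * Ihat ω' ∂μ := by
      refine integral_congr_ae (ae_of_all _ fun ω => ?_)
      simp only [hIh ω, hhdef]
      ring
    rw [hcong, ← hJdef, sub_self]
  · intro x hx hgx
    have hD' : ∀ ω, 0 < β ω * x + η ω + γ ω := hD x hx.1
    have hmh : Measurable (fun ω => h x ω) := by
      simp only [hhdef]
      exact hmf.mul (((hmβ.mul_const x).add hmη).div
        (((hmβ.mul_const x).add hmη).add hmγ))
    have h0h : ∀ ω, 0 ≤ h x ω := by
      intro ω
      rw [hhdef]
      have hN : 0 ≤ β ω * x + η ω := by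
        have := mul_nonneg (h0β ω) hx.1
        linarith [h0η ω]
      exact mul_nonneg (h0f ω) (div_nonneg hN (hD' ω).le)
    have hhf : ∀ ω, h x ω ≤ f ω := by
      intro ω
      rw [hhdef]
      have hr : (β ω * x + η ω) / (β ω * x + η ω + γ ω) ≤ 1 :=
        (div_le_one (hD' ω)).mpr (by linarith [h0γ ω])
      exact mul_le_of_le_one_right (h0f ω) hr
    have hInt : ∫ ω, q ω * h x ω ∂μ = x := by
      have h1 : ∫ ω, q ω * h x ω ∂μ
          = ∫ ω, q ω * f ω * ((β ω * x + η ω) / (β ω * x + η ω + γ ω)) ∂μ := by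
        refine integral_congr_ae (ae_of_all _ fun ω => ?_)
        simp only [hhdef]
        ring
      have h2 := hgdef x
      rw [hgx] at h2
      rw [h1]
      linarith
    refine ⟨hmh, h0h, hhf, hInt, ?_⟩
    intro ω
    rw [hInt, hhdef]
    have hDne := (hD' ω).ne'
    field_simp
end

section
/- Suppose η(ω)f(ω) = 0 for μ-a.e. ω. If I is a solution of the heterogeneous SIS model with I(0,ω) = 0 for μ-a.e. ω, then J(t) = ∫_Ω q(ω) I(t,ω) dμ(ω) = 0 for all t ≥ 0, and for each t ≥ 0 one has I(t,ω) = 0 for μ-a.e. ω. -/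
open MeasureTheory Filter Set Topology

variable {Ω : Type*} [MeasurableSpace Ω]

/-- The aggregated weighted infected population `J(t) = ∫ q(ω) I(t,ω) dμ(ω)`. -/
noncomputable def Jfun (μ : Measure Ω) (q : Ω → ℝ) (I : ℝ → Ω → ℝ) (t : ℝ) : ℝ :=
  ∫ ω, q ω * I t ω ∂μ

/-- The right-hand side of the heterogeneous SIS equation, i.e. `∂I/∂t(t,ω)`. -/
noncomputable def Dfun (μ : Measure Ω) (q β γ η f : Ω → ℝ) (I : ℝ → Ω → ℝ)
    (t : ℝ) (ω : Ω) : ℝ :=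
  (β ω * Jfun μ q I t + η ω) * f ω - (β ω * Jfun μ q I t + η ω + γ ω) * I t ω

/-- A solution of the heterogeneous SIS model: for each `t ≥ 0`, `I(t,·)` is
measurable with `0 ≤ I(t,ω) ≤ f(ω)`; for each `ω`, `t ↦ I(t,ω)` is differentiable
on `[0,∞)` with derivative `(β(ω)J(t)+η(ω))f(ω) − (β(ω)J(t)+η(ω)+γ(ω))I(t,ω)`;
and `J` is differentiable on `[0,∞)` with `J'(t) = ∫ q(ω) ∂I/∂t(t,ω) dμ(ω)`. -/
def IsSolution (μ : Measure Ω) (q β γ η f : Ω → ℝ) (I : ℝ → Ω → ℝ) : Prop :=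
  (∀ t, 0 ≤ t → Measurable (fun ω => I t ω)) ∧
  (∀ t, 0 ≤ t → ∀ ω, 0 ≤ I t ω ∧ I t ω ≤ f ω) ∧
  (∀ ω, ∀ t, 0 ≤ t →
    HasDerivWithinAt (fun s => I s ω) (Dfun μ q β γ η f I t ω) (Ici 0) t) ∧
  (∀ t, 0 ≤ t →
    HasDerivWithinAt (Jfun μ q I) (∫ ω, q ω * Dfun μ q β γ η f I t ω ∂μ) (Ici 0) t)

/-- `h(x,ω) = f(ω)(β(ω)x + η(ω))/(β(ω)x + η(ω) + γ(ω))`. -/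
noncomputable def hfun (β γ η f : Ω → ℝ) (x : ℝ) (ω : Ω) : ℝ :=
  f ω * ((β ω * x + η ω) / (β ω * x + η ω + γ ω))

/-- If `η f = 0` a.e. and `I(0,·) = 0` a.e., then `J(t) = 0` for all `t ≥ 0` and
`I(t,·) = 0` a.e. for each `t ≥ 0`. -/
theorem stmt_11
    {Ω : Type*} [MeasurableSpace Ω] (μ : Measure Ω) [IsProbabilityMeasure μ]
    (q β γ η f : Ω → ℝ)
    (hmq : Measurable q) (hmβ : Measurable β) (hmγ : Measurable γ)
    (hmη : Measurable η) (hmf : Measurable f)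
    (h0q : ∀ ω, 0 ≤ q ω) (h0β : ∀ ω, 0 ≤ β ω) (h0γ : ∀ ω, 0 ≤ γ ω)
    (h0η : ∀ ω, 0 ≤ η ω) (h0f : ∀ ω, 0 ≤ f ω)
    (M : ℝ) (hbq : ∀ ω, q ω ≤ M) (hbβ : ∀ ω, β ω ≤ M) (hbγ : ∀ ω, γ ω ≤ M)
    (hbη : ∀ ω, η ω ≤ M) (hbf : ∀ ω, f ω ≤ M)
    (hfint : ∫ ω, f ω ∂μ = 1) (hqfint : ∫ ω, q ω * f ω ∂μ = 1)
    (hqpos : ∀ᵐ ω ∂μ, 0 < q ω)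
    (ε : ℝ) (hε : 0 < ε) (hβε : ∀ ω, ε ≤ β ω) (hγε : ∀ ω, ε ≤ γ ω)
    (hηf : ∀ᵐ ω ∂μ, η ω * f ω = 0)
    (I : ℝ → Ω → ℝ) (hI : IsSolution μ q β γ η f I)
    (hI0 : ∀ᵐ ω ∂μ, I 0 ω = 0) :
    (∀ t, 0 ≤ t → Jfun μ q I t = 0) ∧
    (∀ t, 0 ≤ t → ∀ᵐ ω ∂μ, I t ω = 0) := by
  obtain ⟨hIm, hIb, hIder, hJder⟩ := hI
  -- basic facts
  have hΩ : Nonempty Ω := by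
    by_contra h
    rw [not_nonempty_iff] at h
    have h1 : (Set.univ : Set Ω) = ∅ := Set.univ_eq_empty_iff.mpr h
    have h2 := measure_univ (μ := μ)
    rw [h1] at h2
    simp at h2
  have hM0 : 0 ≤ M := le_trans (h0q (Classical.arbitrary Ω)) (hbq (Classical.arbitrary Ω))
  set K : ℝ := 2 * M ^ 3 + M with hK
  have hK0 : 0 ≤ K := by positivity
  -- integrability of q * I t
  have hint : ∀ t, 0 ≤ t → Integrable (fun ω => q ω * I t ω) μ := by
    intro t ht
    refine Integrable.mono' (integrable_const (M * M)) ((hmq.mul (hIm t ht)).aestronglyMeasurable)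
      (ae_of_all _ fun ω => ?_)
    have h1 := (hIb t ht ω).1
    have h2 := (hIb t ht ω).2
    rw [Real.norm_eq_abs, abs_of_nonneg (mul_nonneg (h0q ω) h1)]
    exact mul_le_mul (hbq ω) (h2.trans (hbf ω)) h1 hM0
  have hJnn : ∀ t, 0 ≤ t → 0 ≤ Jfun μ q I t := fun t ht =>
    integral_nonneg fun ω => mul_nonneg (h0q ω) (hIb t ht ω).1
  -- J 0 = 0
  have hJ0 : Jfun μ q I 0 = 0 := by
    rw [Jfun, integral_eq_zero_iff_of_nonneg (fun ω => mul_nonneg (h0q ω) (hIb 0 le_rfl ω).1)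
      (hint 0 le_rfl)] <;> try skip
    · filter_upwards [hI0] with ω hω
      simp [hω]
  -- key derivative bound
  have hbound : ∀ t, 0 ≤ t →
      ‖∫ ω, q ω * Dfun μ q β γ η f I t ω ∂μ‖ ≤ K * ‖Jfun μ q I t‖ + 0 := by
    intro t ht
    set J := Jfun μ q I t with hJdef
    have hJn : 0 ≤ J := hJnn t ht
    have hg : Integrable (fun ω => 2 * M ^ 3 * J + M * (q ω * I t ω)) μ :=
      (integrable_const _).add ((hint t ht).const_mul M)
    have hae : ∀ᵐ ω ∂μ, ‖q ω * Dfun μ q β γ η f I t ω‖ ≤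
        2 * M ^ 3 * J + M * (q ω * I t ω) := by
      filter_upwards [hηf] with ω hηfω
      have hI1 := (hIb t ht ω).1
      have hI2 := (hIb t ht ω).2
      have hηI : η ω * I t ω = 0 := by
        have h1 : η ω * I t ω ≤ η ω * f ω := mul_le_mul_of_nonneg_left hI2 (h0η ω)
        have h2 : 0 ≤ η ω * I t ω := mul_nonneg (h0η ω) hI1
        linarith [hηfω ▸ h1]
      have hD : q ω * Dfun μ q β γ η f I t ω =
          q ω * (β ω * J * f ω) - q ω * (β ω * J * I t ω) - q ω * (γ ω * I t ω) := by
        simp only [Dfun, ← hJdef]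
        linear_combination q ω * hηfω - q ω * hηI
      have b1 : q ω * (β ω * J * f ω) ≤ M ^ 3 * J := by
        have : q ω * (β ω * J * f ω) = (q ω * β ω * f ω) * J := by ring
        rw [this]
        have h3 : q ω * β ω * f ω ≤ M ^ 3 := by
          have := mul_le_mul (mul_le_mul (hbq ω) (hbβ ω) (h0β ω) hM0) (hbf ω)
            (h0f ω) (by positivity)
          nlinarith
        exact mul_le_mul_of_nonneg_right h3 hJn
      have b2 : q ω * (β ω * J * I t ω) ≤ M ^ 3 * J := by
        have : q ω * (β ω * J * I t ω) = (q ω * β ω * I t ω) * J := by ring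
        rw [this]
        have h3 : q ω * β ω * I t ω ≤ M ^ 3 := by
          have := mul_le_mul (mul_le_mul (hbq ω) (hbβ ω) (h0β ω) hM0)
            (hI2.trans (hbf ω)) hI1 (by positivity)
          nlinarith
        exact mul_le_mul_of_nonneg_right h3 hJn
      have b3 : q ω * (γ ω * I t ω) ≤ M * (q ω * I t ω) := by
        have : q ω * (γ ω * I t ω) = γ ω * (q ω * I t ω) := by ring
        rw [this]
        exact mul_le_mul_of_nonneg_right (hbγ ω) (mul_nonneg (h0q ω) hI1)
      have nn1 : 0 ≤ q ω * (β ω * J * f ω) :=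
        mul_nonneg (h0q ω) (mul_nonneg (mul_nonneg (h0β ω) hJn) (h0f ω))
      have nn2 : 0 ≤ q ω * (β ω * J * I t ω) :=
        mul_nonneg (h0q ω) (mul_nonneg (mul_nonneg (h0β ω) hJn) hI1)
      have nn3 : 0 ≤ q ω * (γ ω * I t ω) :=
        mul_nonneg (h0q ω) (mul_nonneg (h0γ ω) hI1)
      rw [hD, Real.norm_eq_abs]
      rw [abs_le]
      constructor <;> nlinarith
    calc ‖∫ ω, q ω * Dfun μ q β γ η f I t ω ∂μ‖
        ≤ ∫ ω, ‖q ω * Dfun μ q β γ η f I t ω‖ ∂μ := norm_integral_le_integral_norm _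
      _ ≤ ∫ ω, (2 * M ^ 3 * J + M * (q ω * I t ω)) ∂μ :=
          integral_mono_of_nonneg (ae_of_all _ fun ω => norm_nonneg _) hg hae
      _ = 2 * M ^ 3 * J + M * J := by
          rw [integral_add (integrable_const _) ((hint t ht).const_mul M),
            integral_const, integral_const_mul]
          simp [hJdef, Jfun]
      _ = K * ‖J‖ + 0 := by rw [Real.norm_eq_abs, abs_of_nonneg hJn]; ring
  -- Gronwall: J t = 0 for all t ≥ 0
  have hJzero : ∀ t, 0 ≤ t → Jfun μ q I t = 0 := by
    intro b hb
    have hcont : ContinuousOn (Jfun μ q I) (Icc 0 b) := fun x hx =>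
      ((hJder x hx.1).continuousWithinAt).mono (fun y hy => hy.1)
    have hder : ∀ x ∈ Ico (0:ℝ) b, HasDerivWithinAt (Jfun μ q I)
        (∫ ω, q ω * Dfun μ q β γ η f I x ω ∂μ) (Ici x) x := fun x hx =>
      (hJder x hx.1).mono (Ici_subset_Ici.2 hx.1)
    have hgr := norm_le_gronwallBound_of_norm_deriv_right_le (δ := 0) hcont hder
      (by rw [hJ0]; simp) (fun x hx => hbound x hx.1) b ⟨hb, le_rfl⟩
    rw [gronwallBound_ε0_δ0] at hgr
    exact norm_le_zero_iff.mp hgr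
  refine ⟨hJzero, fun t ht => ?_⟩
  have h0 : ∫ ω, q ω * I t ω ∂μ = 0 := hJzero t ht
  have := (integral_eq_zero_iff_of_nonneg
    (fun ω => mul_nonneg (h0q ω) (hIb t ht ω).1) (hint t ht)).mp h0
  filter_upwards [this, hqpos] with ω h1 h2
  have : q ω * I t ω = 0 := h1
  rcases mul_eq_zero.mp this with h | h
  · exact absurd h (ne_of_gt h2)
  · exact h
end

section
/- Suppose η(ω)f(ω) > 0 on a set of positive μ-measure, and let x* be the unique root in [0,1] of g(x) = ∫_Ω q(ω) f(ω) (β(ω)x + η(ω))/(β(ω)x + η(ω) + γ(ω)) dμ(ω) − x. Then every solution I of the heterogeneous SIS model satisfies lim_{t→∞} I(t,ω) = h(x*, ω) for every ω ∈ Ω, where h(x, ω) = f(ω)(β(ω)x + η(ω))/(β(ω)x + η(ω) + γ(ω)); i.e., the unique steady state is globally asymptotically attracting. -/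
open MeasureTheory Filter Set Topology

variable {Ω : Type*} [MeasurableSpace Ω]

lemma gron_upper {u : ℝ → ℝ} {A B T : ℝ} (hB : 0 < B)
    (hu : ∀ t ∈ Ici T, ∃ d, HasDerivWithinAt u d (Ici T) t ∧ d ≤ A - B * u t) :
    ∀ t ∈ Ici T, u t ≤ A / B + (u T - A / B) * Real.exp (B * (T - t)) := by
  set φ : ℝ → ℝ := fun t => (u t - A / B) * Real.exp (B * t) with hφ
  have hucont : ContinuousOn u (Ici T) := fun t ht =>
    (hu t ht).choose_spec.1.continuousWithinAt
  have hder : ∀ x ∈ interior (Ici T), HasDerivAt φ (deriv φ x) x ∧ deriv φ x ≤ 0 := by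
    intro x hx
    rw [interior_Ici] at hx
    obtain ⟨d, hd0, hle⟩ := hu x (mem_Ici.2 (le_of_lt hx))
    have hd : HasDerivAt u d x := hd0.hasDerivAt (Ici_mem_nhds hx)
    have hφd : HasDerivAt φ (d * Real.exp (B * x)
        + (u x - A / B) * (Real.exp (B * x) * (B * 1))) x :=
      (hd.sub_const _).mul (((hasDerivAt_id x).const_mul B).exp)
    refine ⟨hφd.deriv ▸ hφd, ?_⟩
    rw [hφd.deriv]
    have hE := Real.exp_pos (B * x)
    have hkey : d + B * u x - A ≤ 0 := by linarith
    have heq : d * Real.exp (B * x) + (u x - A / B) * (Real.exp (B * x) * (B * 1))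
        = Real.exp (B * x) * (d + B * u x - A) := by
      field_simp
      ring
    rw [heq]
    exact mul_nonpos_of_nonneg_of_nonpos hE.le hkey
  have hanti : AntitoneOn φ (Ici T) := by
    apply antitoneOn_of_deriv_nonpos (convex_Ici T)
    · exact (hucont.sub continuousOn_const).mul
        ((Real.continuous_exp.comp (continuous_const.mul continuous_id)).continuousOn)
    · exact fun x hx => ((hder x hx).1).differentiableAt.differentiableWithinAt
    · exact fun x hx => (hder x hx).2
  intro t ht
  have h2 := hanti (self_mem_Ici) ht ht
  simp only [hφ] at h2
  have hEt := Real.exp_pos (B * t)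
  rw [show B * (T - t) = B * T - B * t by ring, Real.exp_sub, ← sub_le_iff_le_add']
  calc u t - A / B = (u t - A / B) * Real.exp (B * t) / Real.exp (B * t) := by
        field_simp
    _ ≤ (u T - A / B) * Real.exp (B * T) / Real.exp (B * t) := by
        gcongr
    _ = (u T - A / B) * (Real.exp (B * T) / Real.exp (B * t)) := by ring
lemma sis_upper {μ : Measure Ω} {q β γ η f : Ω → ℝ} {I : ℝ → Ω → ℝ} {ω : Ω}
    {ε M c T : ℝ} (hε : 0 < ε) (hγε : ε ≤ γ ω)
    (h0β : 0 ≤ β ω) (h0η : 0 ≤ η ω) (h0γ : 0 ≤ γ ω) (hbf : f ω ≤ M)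
    (hc : 0 ≤ c) (hT : 0 ≤ T)
    (hIb : ∀ t, 0 ≤ t → 0 ≤ I t ω ∧ I t ω ≤ f ω)
    (hder : ∀ t, 0 ≤ t →
      HasDerivWithinAt (fun s => I s ω) (Dfun μ q β γ η f I t ω) (Ici 0) t)
    (hJ : ∀ t, T ≤ t → Jfun μ q I t ≤ c) :
    ∀ t, T ≤ t → I t ω ≤ hfun β γ η f c ω + M * Real.exp (ε * (T - t)) := by
  set A := (β ω * c + η ω) * f ω with hA
  set B := β ω * c + η ω + γ ω with hB
  have hBpos : 0 < B := by nlinarith [mul_nonneg h0β hc]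
  have hBε : ε ≤ B := by nlinarith [mul_nonneg h0β hc]
  have h0f : 0 ≤ f ω := le_trans (hIb 0 le_rfl).1 (hIb 0 le_rfl).2
  have hg := gron_upper (u := fun s => I s ω) (A := A) (B := B) (T := T) hBpos ?_
  · intro t ht
    have hgt : I t ω ≤ A / B + (I T ω - A / B) * Real.exp (B * (T - t)) := hg t ht
    have hAB : A / B = hfun β γ η f c ω := by
      rw [hfun, hA, hB]; field_simp
    have hABnn : 0 ≤ A / B := div_nonneg (by positivity) hBpos.le
    have hIT := hIb T hT
    have hcoef : I T ω - A / B ≤ M := by linarith [hIT.1, hIT.2]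
    have hexple : Real.exp (B * (T - t)) ≤ Real.exp (ε * (T - t)) := by
      apply Real.exp_le_exp.2; nlinarith
    have hterm : (I T ω - A / B) * Real.exp (B * (T - t)) ≤ M * Real.exp (ε * (T - t)) := by
      rcases le_or_gt (I T ω - A / B) 0 with h | h
      · nlinarith [Real.exp_pos (ε * (T - t)), Real.exp_pos (B * (T - t))]
      · exact mul_le_mul hcoef hexple (Real.exp_pos _).le (by linarith)
    linarith
  · intro t ht
    refine ⟨Dfun μ q β γ η f I t ω, (hder t (hT.trans ht)).mono (Ici_subset_Ici.2 hT), ?_⟩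
    have hJt := hJ t ht
    have hIt := hIb t (hT.trans ht)
    show Dfun μ q β γ η f I t ω ≤ A - B * I t ω
    rw [Dfun, hA, hB]
    nlinarith [mul_nonneg (mul_nonneg h0β (sub_nonneg.2 hJt)) (sub_nonneg.2 hIt.2)]

lemma sis_lower {μ : Measure Ω} {q β γ η f : Ω → ℝ} {I : ℝ → Ω → ℝ} {ω : Ω}
    {ε M c T : ℝ} (hε : 0 < ε) (hγε : ε ≤ γ ω)
    (h0β : 0 ≤ β ω) (h0η : 0 ≤ η ω) (h0γ : 0 ≤ γ ω) (hbf : f ω ≤ M)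
    (hc : 0 ≤ c) (hT : 0 ≤ T)
    (hIb : ∀ t, 0 ≤ t → 0 ≤ I t ω ∧ I t ω ≤ f ω)
    (hder : ∀ t, 0 ≤ t →
      HasDerivWithinAt (fun s => I s ω) (Dfun μ q β γ η f I t ω) (Ici 0) t)
    (hJ : ∀ t, T ≤ t → c ≤ Jfun μ q I t) :
    ∀ t, T ≤ t → hfun β γ η f c ω - M * Real.exp (ε * (T - t)) ≤ I t ω := by
  set A := (β ω * c + η ω) * f ω with hA
  set B := β ω * c + η ω + γ ω with hB
  have hBpos : 0 < B := by nlinarith [mul_nonneg h0β hc]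
  have hBε : ε ≤ B := by nlinarith [mul_nonneg h0β hc]
  have h0f : 0 ≤ f ω := le_trans (hIb 0 le_rfl).1 (hIb 0 le_rfl).2
  have hM : 0 ≤ M := h0f.trans hbf
  have hg := gron_upper (u := fun s => -I s ω) (A := -A) (B := B) (T := T) hBpos ?_
  · intro t ht
    have hgt : -I t ω ≤ -A / B + (-I T ω - -A / B) * Real.exp (B * (T - t)) := hg t ht
    have hAB : A / B = hfun β γ η f c ω := by
      rw [hfun, hA, hB]; field_simp
    have hnAB : -A / B = -(A / B) := by ring
    rw [hnAB] at hgt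
    have hABnn : 0 ≤ A / B := div_nonneg (by positivity) hBpos.le
    have hABf : A / B ≤ f ω := by
      rw [hA, hB, div_le_iff₀ hBpos]
      nlinarith [mul_nonneg (mul_nonneg h0β hc) h0f]
    have hIT := hIb T hT
    have hcoef : -I T ω - -(A / B) ≤ M := by linarith [hIT.1]
    have hexple : Real.exp (B * (T - t)) ≤ Real.exp (ε * (T - t)) := by
      apply Real.exp_le_exp.2; nlinarith
    have hterm : (-I T ω - -(A / B)) * Real.exp (B * (T - t))
        ≤ M * Real.exp (ε * (T - t)) := by
      rcases le_or_gt (-I T ω - -(A / B)) 0 with h | h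
      · nlinarith [Real.exp_pos (ε * (T - t)), Real.exp_pos (B * (T - t))]
      · exact mul_le_mul hcoef hexple (Real.exp_pos _).le hM
    linarith
  · intro t ht
    refine ⟨-(Dfun μ q β γ η f I t ω),
      ((hder t (hT.trans ht)).mono (Ici_subset_Ici.2 hT)).neg, ?_⟩
    have hJt := hJ t ht
    have hIt := hIb t (hT.trans ht)
    show -(Dfun μ q β γ η f I t ω) ≤ -A - B * (-(I t ω))
    rw [Dfun, hA, hB]
    nlinarith [mul_nonneg (mul_nonneg h0β (sub_nonneg.2 hJt)) (sub_nonneg.2 hIt.2)]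

noncomputable def Phi (μ : Measure Ω) (q β γ η f : Ω → ℝ) (x : ℝ) : ℝ :=
  ∫ ω, q ω * f ω * ((β ω * x + η ω) / (β ω * x + η ω + γ ω)) ∂μ

lemma Phi_eq (μ : Measure Ω) (q β γ η f : Ω → ℝ) (x : ℝ) :
    Phi μ q β γ η f x = ∫ ω, q ω * f ω * ((β ω * x + η ω) / (β ω * x + η ω + γ ω)) ∂μ := rfl

set_option maxHeartbeats 1000000

/-- If `η f > 0` on a set of positive measure and `x*` is the unique root of `g` in
`[0,1]`, then every solution satisfies `I(t,ω) → h(x*,ω)` for every `ω`. -/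
theorem stmt_12
    {Ω : Type*} [MeasurableSpace Ω] (μ : Measure Ω) [IsProbabilityMeasure μ]
    (q β γ η f : Ω → ℝ)
    (hmq : Measurable q) (hmβ : Measurable β) (hmγ : Measurable γ)
    (hmη : Measurable η) (hmf : Measurable f)
    (h0q : ∀ ω, 0 ≤ q ω) (h0β : ∀ ω, 0 ≤ β ω) (h0γ : ∀ ω, 0 ≤ γ ω)
    (h0η : ∀ ω, 0 ≤ η ω) (h0f : ∀ ω, 0 ≤ f ω)
    (M : ℝ) (hbq : ∀ ω, q ω ≤ M) (hbβ : ∀ ω, β ω ≤ M) (hbγ : ∀ ω, γ ω ≤ M)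
    (hbη : ∀ ω, η ω ≤ M) (hbf : ∀ ω, f ω ≤ M)
    (hfint : ∫ ω, f ω ∂μ = 1) (hqfint : ∫ ω, q ω * f ω ∂μ = 1)
    (hqpos : ∀ᵐ ω ∂μ, 0 < q ω)
    (ε : ℝ) (hε : 0 < ε) (hβε : ∀ ω, ε ≤ β ω) (hγε : ∀ ω, ε ≤ γ ω)
    (g : ℝ → ℝ)
    (hgdef : ∀ x, g x =
      (∫ ω, q ω * f ω * ((β ω * x + η ω) / (β ω * x + η ω + γ ω)) ∂μ) - x)
    (hηf : 0 < μ {ω | 0 < η ω * f ω})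
    (xstar : ℝ) (hx : xstar ∈ Icc (0:ℝ) 1) (hgx : g xstar = 0)
    (hxuniq : ∀ y ∈ Icc (0:ℝ) 1, g y = 0 → y = xstar)
    (I : ℝ → Ω → ℝ) (hI : IsSolution μ q β γ η f I) :
    ∀ ω, Tendsto (fun t => I t ω) atTop (𝓝 (hfun β γ η f xstar ω)) := by
  obtain ⟨hmeas, hbound, hderI, -⟩ := hI
  -- basic positivity facts
  have hne : Nonempty Ω := by
    by_contra h
    rw [not_nonempty_iff] at h
    have h1 : μ univ = 1 := measure_univ
    rw [Set.univ_eq_empty_iff.2 h, measure_empty] at h1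
    exact zero_ne_one h1
  obtain ⟨ω₀⟩ := hne
  have hεM : ε ≤ M := le_trans (hβε ω₀) (hbβ ω₀)
  have hM : 0 < M := lt_of_lt_of_le hε hεM
  have hM0 : 0 ≤ M := hM.le
  set Jb := Jfun μ q I with hJbdef
  have hJeq : ∀ t, Jb t = ∫ ω, q ω * I t ω ∂μ := fun t => rfl
  -- integrability helper
  have hintb : ∀ (φ : Ω → ℝ) (C : ℝ), Measurable φ → (∀ ω, |φ ω| ≤ C) →
      Integrable φ μ := by
    intro φ C hm hb
    exact (integrable_const C).mono' hm.aestronglyMeasurable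
      (ae_of_all _ fun ω => by simpa [Real.norm_eq_abs] using hb ω)
  -- the ratio function
  have hmr : ∀ x : ℝ, Measurable (fun ω => (β ω * x + η ω) / (β ω * x + η ω + γ ω)) :=
    fun x => ((hmβ.mul_const x).add hmη).div (((hmβ.mul_const x).add hmη).add hmγ)
  have hdenε : ∀ (x : ℝ) (ω : Ω), 0 ≤ x → ε ≤ β ω * x + η ω + γ ω := by
    intro x ω hx0
    nlinarith [mul_nonneg (h0β ω) hx0, h0η ω, hγε ω]
  have hrat : ∀ (x : ℝ) (ω : Ω), 0 ≤ x →
      0 ≤ (β ω * x + η ω) / (β ω * x + η ω + γ ω) ∧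
      (β ω * x + η ω) / (β ω * x + η ω + γ ω) ≤ 1 := by
    intro x ω hx0
    have hd : 0 < β ω * x + η ω + γ ω := lt_of_lt_of_le hε (hdenε x ω hx0)
    constructor
    · apply div_nonneg _ hd.le
      nlinarith [mul_nonneg (h0β ω) hx0, h0η ω]
    · rw [div_le_one hd]
      nlinarith [hγε ω]
  have hratlip : ∀ (x y : ℝ) (ω : Ω), 0 ≤ x → 0 ≤ y →
      |(β ω * x + η ω) / (β ω * x + η ω + γ ω)
        - (β ω * y + η ω) / (β ω * y + η ω + γ ω)| ≤ M / ε * |x - y| := by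
    intro x y ω hx0 hy0
    have hDxε : ε ≤ β ω * x + η ω + γ ω := hdenε x ω hx0
    have hDyε : ε ≤ β ω * y + η ω + γ ω := hdenε y ω hy0
    have hDxp : 0 < β ω * x + η ω + γ ω := lt_of_lt_of_le hε hDxε
    have hDyp : 0 < β ω * y + η ω + γ ω := lt_of_lt_of_le hε hDyε
    have hγDx : γ ω ≤ β ω * x + η ω + γ ω := by
      nlinarith [mul_nonneg (h0β ω) hx0, h0η ω]
    have heq : (β ω * x + η ω) / (β ω * x + η ω + γ ω)
        - (β ω * y + η ω) / (β ω * y + η ω + γ ω)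
        = β ω * γ ω * (x - y) / ((β ω * x + η ω + γ ω) * (β ω * y + η ω + γ ω)) := by
      field_simp
      ring
    rw [heq, abs_div, abs_of_pos (mul_pos hDxp hDyp), abs_mul, abs_mul,
      abs_of_nonneg (h0β ω), abs_of_nonneg (h0γ ω),
      div_le_iff₀ (mul_pos hDxp hDyp)]
    calc β ω * γ ω * |x - y| ≤ M * γ ω * |x - y| := by
          apply mul_le_mul_of_nonneg_right
            (mul_le_mul_of_nonneg_right (hbβ ω) (h0γ ω)) (abs_nonneg _)
      _ = M / ε * ((β ω * y + η ω + γ ω) * γ ω) * |x - y|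
          - M / ε * ((β ω * y + η ω + γ ω) - ε) * γ ω * |x - y| := by
          field_simp
          ring
      _ ≤ M / ε * ((β ω * y + η ω + γ ω) * γ ω) * |x - y| := by
          have h1 : 0 ≤ M / ε * ((β ω * y + η ω + γ ω) - ε) * γ ω * |x - y| := by
            apply mul_nonneg _ (abs_nonneg _)
            apply mul_nonneg _ (h0γ ω)
            apply mul_nonneg (by positivity) (by linarith)
          linarith
      _ ≤ M / ε * ((β ω * y + η ω + γ ω) * (β ω * x + η ω + γ ω)) * |x - y| := by
          apply mul_le_mul_of_nonneg_right _ (abs_nonneg _)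
          apply mul_le_mul_of_nonneg_left _ (by positivity)
          exact mul_le_mul_of_nonneg_left hγDx hDyp.le
      _ = M / ε * |x - y| * ((β ω * x + η ω + γ ω) * (β ω * y + η ω + γ ω)) := by ring
  -- integrability facts
  have hq_int : Integrable q μ :=
    hintb q M hmq (fun ω => by rw [abs_of_nonneg (h0q ω)]; exact hbq ω)
  have hqf_int : Integrable (fun ω => q ω * f ω) μ :=
    hintb _ (M * M) (hmq.mul hmf) (fun ω => by
      rw [abs_of_nonneg (mul_nonneg (h0q ω) (h0f ω))]
      exact mul_le_mul (hbq ω) (hbf ω) (h0f ω) hM0)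
  have hΦint : ∀ x : ℝ, 0 ≤ x → Integrable
      (fun ω => q ω * f ω * ((β ω * x + η ω) / (β ω * x + η ω + γ ω))) μ := by
    intro x hx0
    apply hintb _ (M * M) ((hmq.mul hmf).mul (hmr x))
    intro ω
    have hr := hrat x ω hx0
    have hqf0 : 0 ≤ q ω * f ω := mul_nonneg (h0q ω) (h0f ω)
    simp only [Pi.mul_apply]
    rw [abs_of_nonneg (mul_nonneg hqf0 hr.1)]
    calc q ω * f ω * ((β ω * x + η ω) / (β ω * x + η ω + γ ω))
        ≤ q ω * f ω * 1 := mul_le_mul_of_nonneg_left hr.2 hqf0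
      _ ≤ M * M := by
          rw [mul_one]
          exact mul_le_mul (hbq ω) (hbf ω) (h0f ω) hM0
  have hIint : ∀ t : ℝ, 0 ≤ t → Integrable (fun ω => q ω * I t ω) μ := by
    intro t ht
    apply hintb _ (M * M) (hmq.mul (hmeas t ht))
    intro ω
    have hb := hbound t ht ω
    simp only [Pi.mul_apply]
    rw [abs_of_nonneg (mul_nonneg (h0q ω) hb.1)]
    exact mul_le_mul (hbq ω) (hb.2.trans (hbf ω)) hb.1 hM0
  -- Lipschitz estimate for Phi
  have hgΦ : ∀ x, g x = Phi μ q β γ η f x - x := hgdef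
  have hΦlip : ∀ x y : ℝ, 0 ≤ x → 0 ≤ y →
      |Phi μ q β γ η f x - Phi μ q β γ η f y| ≤ M / ε * |x - y| := by
    intro x y hx0 hy0
    rw [Phi_eq, Phi_eq, ← integral_sub (hΦint x hx0) (hΦint y hy0)]
    have habs : |∫ ω, (q ω * f ω * ((β ω * x + η ω) / (β ω * x + η ω + γ ω))
            - q ω * f ω * ((β ω * y + η ω) / (β ω * y + η ω + γ ω))) ∂μ|
        ≤ ∫ ω, |q ω * f ω * ((β ω * x + η ω) / (β ω * x + η ω + γ ω))
            - q ω * f ω * ((β ω * y + η ω) / (β ω * y + η ω + γ ω))| ∂μ := by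
      simpa [Real.norm_eq_abs] using norm_integral_le_integral_norm
        (fun ω => q ω * f ω * ((β ω * x + η ω) / (β ω * x + η ω + γ ω))
          - q ω * f ω * ((β ω * y + η ω) / (β ω * y + η ω + γ ω)))
    calc |∫ ω, (q ω * f ω * ((β ω * x + η ω) / (β ω * x + η ω + γ ω))
            - q ω * f ω * ((β ω * y + η ω) / (β ω * y + η ω + γ ω))) ∂μ|
        ≤ ∫ ω, |q ω * f ω * ((β ω * x + η ω) / (β ω * x + η ω + γ ω))
            - q ω * f ω * ((β ω * y + η ω) / (β ω * y + η ω + γ ω))| ∂μ := habs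
      _ ≤ ∫ ω, q ω * f ω * (M / ε * |x - y|) ∂μ := by
          apply integral_mono ((hΦint x hx0).sub (hΦint y hy0)).abs
            (hqf_int.mul_const _)
          intro ω
          simp only [Pi.sub_apply]
          have hqf0 : 0 ≤ q ω * f ω := mul_nonneg (h0q ω) (h0f ω)
          rw [← mul_sub, abs_mul, abs_of_nonneg hqf0]
          exact mul_le_mul_of_nonneg_left (hratlip x y ω hx0 hy0) hqf0
      _ = M / ε * |x - y| := by rw [integral_mul_const, hqfint, one_mul]
  -- bounds on J
  have hJ01 : ∀ t : ℝ, 0 ≤ t → 0 ≤ Jb t ∧ Jb t ≤ 1 := by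
    intro t ht
    rw [hJeq t]
    constructor
    · exact integral_nonneg fun ω => mul_nonneg (h0q ω) (hbound t ht ω).1
    · calc (∫ ω, q ω * I t ω ∂μ) ≤ ∫ ω, q ω * f ω ∂μ :=
            integral_mono (hIint t ht) hqf_int
              (fun ω => mul_le_mul_of_nonneg_left (hbound t ht ω).2 (h0q ω))
        _ = 1 := hqfint
  have evJ : ∀ᶠ t in atTop, 0 ≤ Jb t ∧ Jb t ≤ 1 :=
    (eventually_ge_atTop 0).mono fun t ht => hJ01 t ht
  have bddU : IsBoundedUnder (· ≤ ·) atTop Jb :=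
    isBoundedUnder_of_eventually_le (a := 1) (evJ.mono fun t h => h.2)
  have bddL : IsBoundedUnder (· ≥ ·) atTop Jb :=
    isBoundedUnder_of_eventually_ge (a := 0) (evJ.mono fun t h => h.1)
  set U := limsup Jb atTop with hUdef
  set L := liminf Jb atTop with hLdef
  have hLU : L ≤ U := liminf_le_limsup bddU bddL
  have hU1 : U ≤ 1 := limsup_le_of_le bddL.isCoboundedUnder_le (evJ.mono fun t h => h.2)
  have hL0 : 0 ≤ L := le_liminf_of_le bddU.isCoboundedUnder_ge (evJ.mono fun t h => h.1)
  have hU0 : 0 ≤ U := hL0.trans hLU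
  -- exponential decay helper
  have htend0 : ∀ T C : ℝ, Tendsto (fun s => C * Real.exp (ε * (T - s))) atTop (𝓝 0) := by
    intro T C
    have h1 : Tendsto (fun s : ℝ => ε * (T - s)) atTop atBot := by
      apply Tendsto.const_mul_atBot hε
      exact (tendsto_atBot_add_const_left atTop T tendsto_neg_atTop_atBot).congr (fun s => by ring)
    have h2 := Real.tendsto_exp_atBot.comp h1
    simpa using h2.const_mul C
  -- key upper estimate
  have keyU : ∀ δ : ℝ, 0 < δ → U ≤ Phi μ q β γ η f (U + δ) := by
    intro δ hδ
    have hev : ∀ᶠ t in atTop, Jb t < U + δ :=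
      eventually_lt_of_limsup_lt (lt_add_of_pos_right U hδ) bddU
    obtain ⟨a, ha⟩ := eventually_atTop.1 hev
    set T := max a 0 with hTd
    have hT0 : (0:ℝ) ≤ T := le_max_right a 0
    have hJle : ∀ t, T ≤ t → Jfun μ q I t ≤ U + δ := fun t ht =>
      (ha t ((le_max_left a 0).trans ht)).le
    have hc : 0 ≤ U + δ := by linarith
    have hUp : ∀ (ω' : Ω) (t : ℝ), T ≤ t →
        I t ω' ≤ hfun β γ η f (U + δ) ω' + M * Real.exp (ε * (T - t)) := fun ω' =>
      sis_upper hε (hγε ω') (h0β ω') (h0η ω') (h0γ ω') (hbf ω') hc hT0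
        (fun t ht => hbound t ht ω') (hderI ω') hJle
    have hJbb : ∀ t, T ≤ t →
        Jb t ≤ Phi μ q β γ η f (U + δ) + M * M * Real.exp (ε * (T - t)) := by
      intro t ht
      have hti : (0:ℝ) ≤ t := hT0.trans ht
      have h1 : Jb t ≤ ∫ ω', (q ω' * f ω' *
          ((β ω' * (U + δ) + η ω') / (β ω' * (U + δ) + η ω' + γ ω'))
          + q ω' * (M * Real.exp (ε * (T - t)))) ∂μ := by
        rw [hJeq t]
        apply integral_mono (hIint t hti)
          ((hΦint (U + δ) hc).add (hq_int.mul_const _))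
        intro ω'
        have h3 := mul_le_mul_of_nonneg_left (hUp ω' t ht) (h0q ω')
        calc q ω' * I t ω'
            ≤ q ω' * (hfun β γ η f (U + δ) ω' + M * Real.exp (ε * (T - t))) := h3
          _ = q ω' * f ω' * ((β ω' * (U + δ) + η ω') / (β ω' * (U + δ) + η ω' + γ ω'))
              + q ω' * (M * Real.exp (ε * (T - t))) := by rw [hfun]; ring
      rw [integral_add (hΦint (U + δ) hc) (hq_int.mul_const _), integral_mul_const] at h1
      have h4 : (∫ ω', q ω' ∂μ) ≤ M := by
        calc (∫ ω', q ω' ∂μ) ≤ ∫ _ω', M ∂μ := integral_mono hq_int (integrable_const M) hbq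
          _ = M := by simp
      have h5 : (0:ℝ) ≤ M * Real.exp (ε * (T - t)) := by positivity
      have h6 : (∫ ω', q ω' ∂μ) * (M * Real.exp (ε * (T - t)))
          ≤ M * M * Real.exp (ε * (T - t)) := by
        calc (∫ ω', q ω' ∂μ) * (M * Real.exp (ε * (T - t)))
            ≤ M * (M * Real.exp (ε * (T - t))) := mul_le_mul_of_nonneg_right h4 h5
          _ = M * M * Real.exp (ε * (T - t)) := by ring
      rw [Phi_eq]
      linarith [h1, h6]
    have hstep : ∀ s, T ≤ s →
        U ≤ Phi μ q β γ η f (U + δ) + M * M * Real.exp (ε * (T - s)) := by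
      intro s hs
      apply limsup_le_of_le bddL.isCoboundedUnder_le
      filter_upwards [eventually_ge_atTop s] with t ht
      have hexp : Real.exp (ε * (T - t)) ≤ Real.exp (ε * (T - s)) :=
        Real.exp_le_exp.2 (mul_le_mul_of_nonneg_left
          (show T - t ≤ T - s by linarith) hε.le)
      have hMM : (0:ℝ) ≤ M * M := mul_nonneg hM0 hM0
      have := hJbb t (hs.trans ht)
      nlinarith [this, mul_le_mul_of_nonneg_left hexp hMM]
    have htend : Tendsto (fun s => Phi μ q β γ η f (U + δ) + M * M * Real.exp (ε * (T - s)))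
        atTop (𝓝 (Phi μ q β γ η f (U + δ))) := by
      have := (htend0 T (M * M)).const_add (Phi μ q β γ η f (U + δ))
      simpa using this
    exact ge_of_tendsto htend ((eventually_ge_atTop T).mono hstep)
  -- key lower estimate
  have keyL : ∀ δ : ℝ, 0 < δ → Phi μ q β γ η f (max (L - δ) 0) ≤ L := by
    intro δ hδ
    have hev : ∀ᶠ t in atTop, L - δ < Jb t :=
      eventually_lt_of_lt_liminf (by linarith) bddL
    obtain ⟨a, ha⟩ := eventually_atTop.1 (hev.and (eventually_ge_atTop 0))
    set T := max a 0 with hTd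
    have hT0 : (0:ℝ) ≤ T := le_max_right a 0
    set c' : ℝ := max (L - δ) 0 with hc'd
    have hc'0 : 0 ≤ c' := le_max_right _ _
    have hJge : ∀ t, T ≤ t → c' ≤ Jfun μ q I t := by
      intro t ht
      have h1 := ha t ((le_max_left a 0).trans ht)
      exact max_le h1.1.le (hJ01 t h1.2).1
    have hLo : ∀ (ω' : Ω) (t : ℝ), T ≤ t →
        hfun β γ η f c' ω' - M * Real.exp (ε * (T - t)) ≤ I t ω' := fun ω' =>
      sis_lower hε (hγε ω') (h0β ω') (h0η ω') (h0γ ω') (hbf ω') hc'0 hT0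
        (fun t ht => hbound t ht ω') (hderI ω') hJge
    have hJbb : ∀ t, T ≤ t →
        Phi μ q β γ η f c' - M * M * Real.exp (ε * (T - t)) ≤ Jb t := by
      intro t ht
      have hti : (0:ℝ) ≤ t := hT0.trans ht
      have h1 : (∫ ω', (q ω' * f ω' * ((β ω' * c' + η ω') / (β ω' * c' + η ω' + γ ω'))
          - q ω' * (M * Real.exp (ε * (T - t)))) ∂μ) ≤ Jb t := by
        rw [hJeq t]
        apply integral_mono ((hΦint c' hc'0).sub (hq_int.mul_const _)) (hIint t hti)
        intro ω'
        have h3 := mul_le_mul_of_nonneg_left (hLo ω' t ht) (h0q ω')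
        calc q ω' * f ω' * ((β ω' * c' + η ω') / (β ω' * c' + η ω' + γ ω'))
              - q ω' * (M * Real.exp (ε * (T - t)))
            = q ω' * (hfun β γ η f c' ω' - M * Real.exp (ε * (T - t))) := by
              rw [hfun]; ring
          _ ≤ q ω' * I t ω' := h3
      rw [integral_sub (hΦint c' hc'0) (hq_int.mul_const _), integral_mul_const] at h1
      have h4 : (∫ ω', q ω' ∂μ) ≤ M := by
        calc (∫ ω', q ω' ∂μ) ≤ ∫ _ω', M ∂μ := integral_mono hq_int (integrable_const M) hbq
          _ = M := by simp
      have h5 : (0:ℝ) ≤ M * Real.exp (ε * (T - t)) := by positivity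
      have h6 : (∫ ω', q ω' ∂μ) * (M * Real.exp (ε * (T - t)))
          ≤ M * M * Real.exp (ε * (T - t)) := by
        calc (∫ ω', q ω' ∂μ) * (M * Real.exp (ε * (T - t)))
            ≤ M * (M * Real.exp (ε * (T - t))) := mul_le_mul_of_nonneg_right h4 h5
          _ = M * M * Real.exp (ε * (T - t)) := by ring
      rw [Phi_eq]
      linarith [h1, h6]
    have hstep : ∀ s, T ≤ s →
        Phi μ q β γ η f c' - M * M * Real.exp (ε * (T - s)) ≤ L := by
      intro s hs
      apply le_liminf_of_le bddU.isCoboundedUnder_ge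
      filter_upwards [eventually_ge_atTop s] with t ht
      have hexp : Real.exp (ε * (T - t)) ≤ Real.exp (ε * (T - s)) :=
        Real.exp_le_exp.2 (mul_le_mul_of_nonneg_left
          (show T - t ≤ T - s by linarith) hε.le)
      have hMM : (0:ℝ) ≤ M * M := mul_nonneg hM0 hM0
      have := hJbb t (hs.trans ht)
      nlinarith [this, mul_le_mul_of_nonneg_left hexp hMM]
    have htend : Tendsto (fun s => Phi μ q β γ η f c' - M * M * Real.exp (ε * (T - s)))
        atTop (𝓝 (Phi μ q β γ η f c')) := by
      have h := Tendsto.const_sub (Phi μ q β γ η f c') (htend0 T (M * M))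
      simpa using h
    exact le_of_tendsto htend ((eventually_ge_atTop T).mono hstep)
  -- sign of g at the limsup / liminf
  have hgU : 0 ≤ g U := by
    rw [hgΦ U, sub_nonneg]
    apply le_of_forall_pos_le_add
    intro r hr
    have hδ : 0 < r * ε / M := by positivity
    have h1 := keyU _ hδ
    have h2 := hΦlip (U + r * ε / M) U (by linarith) hU0
    have h3 : |U + r * ε / M - U| = r * ε / M := by
      rw [add_sub_cancel_left, abs_of_pos hδ]
    rw [h3] at h2
    have h4 : M / ε * (r * ε / M) = r := by field_simp
    rw [h4] at h2
    have h5 := le_abs_self (Phi μ q β γ η f (U + r * ε / M) - Phi μ q β γ η f U)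
    linarith
  have hgL : g L ≤ 0 := by
    rw [hgΦ L, sub_nonpos]
    apply le_of_forall_pos_le_add
    intro r hr
    have hδ : 0 < r * ε / M := by positivity
    set c' : ℝ := max (L - r * ε / M) 0 with hc'd
    have hc'0 : 0 ≤ c' := le_max_right _ _
    have hc'le : c' ≤ L := max_le (by linarith) hL0
    have h1 := keyL _ hδ
    have h2 := hΦlip L c' hL0 hc'0
    have h3 : |L - c'| ≤ r * ε / M := by
      rw [abs_of_nonneg (sub_nonneg.2 hc'le)]
      have := le_max_left (L - r * ε / M) 0
      linarith
    have h4 : M / ε * |L - c'| ≤ M / ε * (r * ε / M) :=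
      mul_le_mul_of_nonneg_left h3 (by positivity)
    have h5 : M / ε * (r * ε / M) = r := by field_simp
    have h6 := le_abs_self (Phi μ q β γ η f L - Phi μ q β γ η f c')
    linarith
  -- g 0 > 0
  have hg0 : 0 < g 0 := by
    rw [hgdef 0]
    have hpos : 0 < ∫ ω, q ω * f ω * ((β ω * 0 + η ω) / (β ω * 0 + η ω + γ ω)) ∂μ := by
      rw [integral_pos_iff_support_of_nonneg_ae
        (ae_of_all _ fun ω => mul_nonneg (mul_nonneg (h0q ω) (h0f ω)) (hrat 0 ω le_rfl).1)
        (hΦint 0 le_rfl)]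
      have hnull : μ {ω | ¬ 0 < q ω} = 0 := by
        rw [← compl_setOf]
        exact ae_iff.1 hqpos
      have hsub : {ω | 0 < η ω * f ω} ⊆
          (Function.support fun ω => q ω * f ω * ((β ω * 0 + η ω) / (β ω * 0 + η ω + γ ω)))
          ∪ {ω | ¬ 0 < q ω} := by
        intro ω hω
        by_cases hq : 0 < q ω
        · left
          simp only [Set.mem_setOf_eq] at hω
          have hη : 0 < η ω := by
            rcases (h0η ω).lt_or_eq with h | h
            · exact h
            · exfalso; rw [← h, zero_mul] at hω; exact lt_irrefl 0 hω
          have hf : 0 < f ω := by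
            rcases (h0f ω).lt_or_eq with h | h
            · exact h
            · exfalso; rw [← h, mul_zero] at hω; exact lt_irrefl 0 hω
          have hnum : 0 < β ω * 0 + η ω := by rw [mul_zero, zero_add]; exact hη
          have hden : 0 < β ω * 0 + η ω + γ ω := by
            have := hγε ω; linarith
          exact ne_of_gt (mul_pos (mul_pos hq hf) (div_pos hnum hden))
        · right; exact hq
      calc (0:ENNReal) < μ {ω | 0 < η ω * f ω} := hηf
        _ ≤ μ ((Function.support fun ω =>
              q ω * f ω * ((β ω * 0 + η ω) / (β ω * 0 + η ω + γ ω)))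
            ∪ {ω | ¬ 0 < q ω}) := measure_mono hsub
        _ ≤ μ (Function.support fun ω =>
              q ω * f ω * ((β ω * 0 + η ω) / (β ω * 0 + η ω + γ ω)))
            + μ {ω | ¬ 0 < q ω} := measure_union_le _ _
        _ = μ (Function.support fun ω =>
              q ω * f ω * ((β ω * 0 + η ω) / (β ω * 0 + η ω + γ ω))) := by
            rw [hnull, add_zero]
    linarith
  -- g 1 < 0
  have hg1 : g 1 < 0 := by
    rw [hgdef 1]
    have hkey : (∫ ω, q ω * f ω * ((β ω * 1 + η ω) / (β ω * 1 + η ω + γ ω)) ∂μ)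
        ≤ 1 - ε / (3 * M) := by
      have hpt : ∀ ω, q ω * f ω * ((β ω * 1 + η ω) / (β ω * 1 + η ω + γ ω))
          ≤ q ω * f ω * (1 - ε / (3 * M)) := by
        intro ω
        have hqf0 : 0 ≤ q ω * f ω := mul_nonneg (h0q ω) (h0f ω)
        apply mul_le_mul_of_nonneg_left _ hqf0
        have hd : 0 < β ω * 1 + η ω + γ ω := lt_of_lt_of_le hε (hdenε 1 ω zero_le_one)
        rw [div_le_iff₀ hd]
        have h3M : β ω * 1 + η ω + γ ω ≤ 3 * M := by
          have := hbβ ω; have := hbη ω; have := hbγ ω; linarith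
        have ha0 : 0 ≤ ε / (3 * M) := by positivity
        have h7 : ε / (3 * M) * (β ω * 1 + η ω + γ ω) ≤ ε / (3 * M) * (3 * M) :=
          mul_le_mul_of_nonneg_left h3M ha0
        have h8 : ε / (3 * M) * (3 * M) = ε := div_mul_cancel₀ ε (by positivity)
        have := hγε ω
        nlinarith
      calc (∫ ω, q ω * f ω * ((β ω * 1 + η ω) / (β ω * 1 + η ω + γ ω)) ∂μ)
          ≤ ∫ ω, q ω * f ω * (1 - ε / (3 * M)) ∂μ :=
            integral_mono (hΦint 1 zero_le_one) (hqf_int.mul_const _) hpt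
        _ = 1 - ε / (3 * M) := by rw [integral_mul_const, hqfint, one_mul]
    have : 0 < ε / (3 * M) := by positivity
    linarith
  -- continuity of g on [0, 1]
  have hgcont : ContinuousOn g (Icc (0:ℝ) 1) := by
    have hlip : LipschitzOnWith (Real.toNNReal (M / ε + 1)) g (Icc (0:ℝ) 1) := by
      apply LipschitzOnWith.of_dist_le_mul
      intro x hx' y hy'
      rw [Real.dist_eq, Real.dist_eq, hgΦ x, hgΦ y,
        Real.coe_toNNReal _ (by positivity : (0:ℝ) ≤ M / ε + 1)]
      have h1 := hΦlip x y hx'.1 hy'.1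
      have h2 : Phi μ q β γ η f x - x - (Phi μ q β γ η f y - y)
          = (Phi μ q β γ η f x - Phi μ q β γ η f y) - (x - y) := by ring
      rw [h2]
      calc |(Phi μ q β γ η f x - Phi μ q β γ η f y) - (x - y)|
          ≤ |Phi μ q β γ η f x - Phi μ q β γ η f y| + |x - y| := abs_sub _ _
        _ ≤ M / ε * |x - y| + 1 * |x - y| := by
            rw [one_mul]; exact add_le_add h1 le_rfl
        _ = (M / ε + 1) * |x - y| := by ring
    exact hlip.continuousOn
  -- U ≤ xstar and xstar ≤ L via IVT and uniqueness
  have hUx : U ≤ xstar := by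
    by_contra hcon
    push_neg at hcon
    have hcont' : ContinuousOn g (Icc U 1) := hgcont.mono (Icc_subset_Icc hU0 le_rfl)
    have hmem : (0:ℝ) ∈ Icc (g 1) (g U) := ⟨hg1.le, hgU⟩
    obtain ⟨y, hy, hgy⟩ := intermediate_value_Icc' hU1 hcont' hmem
    have hyx : y = xstar := hxuniq y ⟨hU0.trans hy.1, hy.2⟩ hgy
    linarith [hy.1]
  have hxL : xstar ≤ L := by
    by_contra hcon
    push_neg at hcon
    have hL1 : L ≤ 1 := hLU.trans hU1
    have hcont' : ContinuousOn g (Icc 0 L) := hgcont.mono (Icc_subset_Icc le_rfl hL1)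
    have hmem : (0:ℝ) ∈ Icc (g L) (g 0) := ⟨hgL, hg0.le⟩
    obtain ⟨y, hy, hgy⟩ := intermediate_value_Icc' hL0 hcont' hmem
    have hyx : y = xstar := hxuniq y ⟨hy.1, hy.2.trans hL1⟩ hgy
    linarith [hy.2]
  have hJtend : Tendsto Jb atTop (𝓝 xstar) :=
    tendsto_of_liminf_eq_limsup (le_antisymm (hLU.trans hUx) hxL)
      (le_antisymm hUx (hxL.trans hLU)) bddU bddL
  -- final pointwise convergence
  intro ω
  have hx0 : 0 ≤ xstar := hx.1
  have hflip : ∀ a b : ℝ, 0 ≤ a → 0 ≤ b →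
      |hfun β γ η f a ω - hfun β γ η f b ω| ≤ M * M / ε * |a - b| := by
    intro a b ha hb
    rw [hfun, hfun, ← mul_sub, abs_mul, abs_of_nonneg (h0f ω)]
    calc f ω * |(β ω * a + η ω) / (β ω * a + η ω + γ ω)
            - (β ω * b + η ω) / (β ω * b + η ω + γ ω)|
        ≤ M * (M / ε * |a - b|) :=
          mul_le_mul (hbf ω) (hratlip a b ω ha hb) (abs_nonneg _) hM0
      _ = M * M / ε * |a - b| := by ring
  rw [Metric.tendsto_atTop]
  intro r hr
  have hK2pos : 0 < M * M / ε + 1 := by positivity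
  set δ := r / (2 * (M * M / ε + 1)) with hδdef
  have hδ : 0 < δ := by positivity
  obtain ⟨N, hN⟩ := Metric.tendsto_atTop.1 hJtend δ hδ
  set T := max N 0 with hTdd
  have hT0 : (0:ℝ) ≤ T := le_max_right N 0
  have hcplus : 0 ≤ xstar + δ := by linarith
  set c' : ℝ := max (xstar - δ) 0 with hc'd
  have hc'0 : 0 ≤ c' := le_max_right _ _
  have hc'le : c' ≤ xstar := max_le (by linarith) hx0
  have hJup : ∀ t, T ≤ t → Jfun μ q I t ≤ xstar + δ := by
    intro t ht
    have h1 := hN t ((le_max_left N 0).trans ht)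
    rw [Real.dist_eq] at h1
    have h2 := (abs_lt.1 h1).2
    have : Jfun μ q I t = Jb t := rfl
    linarith [h2]
  have hJlo : ∀ t, T ≤ t → c' ≤ Jfun μ q I t := by
    intro t ht
    have h1 := hN t ((le_max_left N 0).trans ht)
    rw [Real.dist_eq] at h1
    have h2 := (abs_lt.1 h1).1
    exact max_le (by linarith) (hJ01 t (hT0.trans ht)).1
  have hup := sis_upper (ω := ω) hε (hγε ω) (h0β ω) (h0η ω) (h0γ ω) (hbf ω) hcplus hT0
    (fun t ht => hbound t ht ω) (hderI ω) hJup
  have hlo := sis_lower (ω := ω) hε (hγε ω) (h0β ω) (h0η ω) (h0γ ω) (hbf ω) hc'0 hT0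
    (fun t ht => hbound t ht ω) (hderI ω) hJlo
  have hup2 : hfun β γ η f (xstar + δ) ω ≤ hfun β γ η f xstar ω + M * M / ε * δ := by
    have h1 := hflip (xstar + δ) xstar hcplus hx0
    have h2 : |xstar + δ - xstar| = δ := by rw [add_sub_cancel_left, abs_of_pos hδ]
    rw [h2] at h1
    have := le_abs_self (hfun β γ η f (xstar + δ) ω - hfun β γ η f xstar ω)
    linarith
  have hlo2 : hfun β γ η f xstar ω - M * M / ε * δ ≤ hfun β γ η f c' ω := by
    have h1 := hflip xstar c' hx0 hc'0
    have h2 : |xstar - c'| ≤ δ := by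
      rw [abs_of_nonneg (sub_nonneg.2 hc'le)]
      have := le_max_left (xstar - δ) 0
      linarith
    have h3 : M * M / ε * |xstar - c'| ≤ M * M / ε * δ :=
      mul_le_mul_of_nonneg_left h2 (by positivity)
    have := le_abs_self (hfun β γ η f xstar ω - hfun β γ η f c' ω)
    linarith
  have hquant : M * M / ε * δ < r / 2 := by
    have h4 : M * M / ε < M * M / ε + 1 := by linarith
    calc M * M / ε * δ < (M * M / ε + 1) * δ := mul_lt_mul_of_pos_right h4 hδ
      _ = r / 2 := by rw [hδdef]; field_simp
  obtain ⟨N2, hN2⟩ := eventually_atTop.1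
    ((htend0 T M).eventually (gt_mem_nhds (by positivity : (0:ℝ) < r / 2)))
  refine ⟨max T N2, fun t ht => ?_⟩
  have htT : T ≤ t := (le_max_left T N2).trans ht
  have h1 := hup t htT
  have h2 := hlo t htT
  have h3 := hN2 t ((le_max_right T N2).trans ht)
  rw [Real.dist_eq, abs_lt]
  constructor
  · linarith
  · linarith
end

section
/- Suppose η(ω)f(ω) = 0 for μ-a.e. ω and R₀ ≤ 1, where R₀ = ∫_Ω q(ω) f(ω) β(ω)/γ(ω) dμ(ω). Then every solution I of the heterogeneous SIS model satisfies lim_{t→∞} I(t,ω) = 0 for μ-a.e. ω ∈ Ω; i.e., the disease-free steady state is globally asymptotically attracting. -/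
open MeasureTheory Filter Set Topology

variable {Ω : Type*} [MeasurableSpace Ω]

/-- Scalar one-sided Gronwall-type bound. -/
lemma ode_bound (u d : ℝ → ℝ) (c B t₀ : ℝ) (hB : 0 < B)
    (hu : ∀ t, t₀ ≤ t → HasDerivAt u (d t) t)
    (hd : ∀ t, t₀ ≤ t → d t ≤ c - B * u t) :
    ∀ t, t₀ ≤ t → u t ≤ c / B + (u t₀ - c / B) * Real.exp (-B * (t - t₀)) := by
  set g : ℝ → ℝ := fun t => Real.exp (B * t) * (u t - c / B) with hg
  have hgd : ∀ t, t₀ ≤ t → HasDerivAt g (Real.exp (B * t) * (d t + B * u t - c)) t := by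
    intro t ht
    have h1 : HasDerivAt (fun t => Real.exp (B * t)) (B * Real.exp (B * t)) t := by
      simpa [mul_comm, Function.comp_def] using (Real.hasDerivAt_exp (B * t)).comp t ((hasDerivAt_id t).const_mul B)
    have h2 : HasDerivAt (fun t => u t - c / B) (d t) t := (hu t ht).sub_const _
    have := h1.mul h2
    convert this using 1
    iterate 3 rfl
    have hcB : B * (c / B) = c := by field_simp
    linear_combination Real.exp (B * t) * hcB
  have hanti : AntitoneOn g (Ici t₀) := by
    apply antitoneOn_of_hasDerivWithinAt_nonpos (convex_Ici t₀)
    · intro t ht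
      exact (hgd t ht).continuousAt.continuousWithinAt
    · intro t ht
      rw [interior_Ici] at ht
      exact (hgd t (le_of_lt ht)).hasDerivWithinAt
    · intro t ht
      rw [interior_Ici] at ht
      have := hd t (le_of_lt ht)
      have e := Real.exp_pos (B * t)
      nlinarith
  intro t ht
  have hgt : Real.exp (B * t) * (u t - c / B) ≤ Real.exp (B * t₀) * (u t₀ - c / B) :=
    hanti self_mem_Ici ht ht
  have he : Real.exp (-B * (t - t₀)) * Real.exp (B * t) = Real.exp (B * t₀) := by
    rw [← Real.exp_add]; ring_nf
  have hep : (0:ℝ) < Real.exp (-B * (t - t₀)) := Real.exp_pos _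
  have h3 := mul_le_mul_of_nonneg_left hgt (le_of_lt hep)
  rw [← mul_assoc, ← mul_assoc, he] at h3
  have hbp : (0:ℝ) < Real.exp (B * t₀) := Real.exp_pos _
  nlinarith [mul_le_mul_of_nonneg_left h3 (le_of_lt (inv_pos.2 hbp)),
    mul_inv_cancel₀ (ne_of_gt hbp)]

lemma exp_term_tendsto (ε t₀ : ℝ) (hε : 0 < ε) :
    Tendsto (fun t => Real.exp (-ε * (t - t₀))) atTop (𝓝 0) := by
  have h1 : Tendsto (fun t : ℝ => t - t₀) atTop atTop :=
    tendsto_atTop_add_const_right _ (-t₀) tendsto_id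
  have h2 : Tendsto (fun t : ℝ => ε * (t - t₀)) atTop atTop := h1.const_mul_atTop hε
  have h3 : Tendsto (fun t : ℝ => -ε * (t - t₀)) atTop atBot := by
    simpa [Function.comp_def, neg_mul] using tendsto_neg_atTop_atBot.comp h2
  exact Real.tendsto_exp_atBot.comp h3

set_option maxHeartbeats 1000000 in
/-- If `η f = 0` a.e. and `R₀ ≤ 1`, then for every solution `I(t,ω) → 0` as
`t → ∞` for a.e. `ω`. -/
theorem stmt_13
    {Ω : Type*} [MeasurableSpace Ω] (μ : Measure Ω) [IsProbabilityMeasure μ]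
    (q β γ η f : Ω → ℝ)
    (hmq : Measurable q) (hmβ : Measurable β) (hmγ : Measurable γ)
    (hmη : Measurable η) (hmf : Measurable f)
    (h0q : ∀ ω, 0 ≤ q ω) (h0β : ∀ ω, 0 ≤ β ω) (h0γ : ∀ ω, 0 ≤ γ ω)
    (h0η : ∀ ω, 0 ≤ η ω) (h0f : ∀ ω, 0 ≤ f ω)
    (M : ℝ) (hbq : ∀ ω, q ω ≤ M) (hbβ : ∀ ω, β ω ≤ M) (hbγ : ∀ ω, γ ω ≤ M)
    (hbη : ∀ ω, η ω ≤ M) (hbf : ∀ ω, f ω ≤ M)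
    (hfint : ∫ ω, f ω ∂μ = 1) (hqfint : ∫ ω, q ω * f ω ∂μ = 1)
    (hqpos : ∀ᵐ ω ∂μ, 0 < q ω)
    (ε : ℝ) (hε : 0 < ε) (hβε : ∀ ω, ε ≤ β ω) (hγε : ∀ ω, ε ≤ γ ω)
    (hηf : ∀ᵐ ω ∂μ, η ω * f ω = 0)
    (R₀ : ℝ) (hR₀ : R₀ = ∫ ω, q ω * f ω * (β ω / γ ω) ∂μ) (hR₀le : R₀ ≤ 1)
    (I : ℝ → Ω → ℝ) (hI : IsSolution μ q β γ η f I) :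
    ∀ᵐ ω ∂μ, Tendsto (fun t => I t ω) atTop (𝓝 0) := by
  obtain ⟨hImeas, hIbd, hIderiv, hJderiv⟩ := hI
  -- Ω is nonempty, so ε ≤ M and 0 < M
  have hne : Nonempty Ω := by
    by_contra h
    rw [not_nonempty_iff] at h
    have h1 : (univ : Set Ω) = ∅ := univ_eq_empty_iff.2 h
    have h2 : μ univ = 1 := measure_univ
    rw [h1] at h2
    simp at h2
  have hεM : ε ≤ M := le_trans (hβε (Classical.arbitrary Ω)) (hbβ _)
  have hM0 : 0 < M := lt_of_lt_of_le hε hεM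
  -- integrability of bounded measurable functions
  have hint : ∀ g : Ω → ℝ, Measurable g → ∀ C : ℝ, (∀ ω, |g ω| ≤ C) → Integrable g μ := by
    intro g hg C hC
    exact ⟨hg.aestronglyMeasurable,
      HasFiniteIntegral.of_bounded (C := C) (ae_of_all _ (by simpa [Real.norm_eq_abs] using hC))⟩
  have hJint : ∀ t, 0 ≤ t → Integrable (fun ω => q ω * I t ω) μ := by
    intro t ht
    apply hint _ (hmq.mul (hImeas t ht)) (M * M)
    intro ω
    rw [Pi.mul_apply, abs_of_nonneg (mul_nonneg (h0q ω) (hIbd t ht ω).1)]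
    exact mul_le_mul (hbq ω) (le_trans (hIbd t ht ω).2 (hbf ω)) (hIbd t ht ω).1 hM0.le
  have hJ0 : ∀ t, 0 ≤ t → 0 ≤ Jfun μ q I t := by
    intro t ht
    exact integral_nonneg fun ω => mul_nonneg (h0q ω) (hIbd t ht ω).1
  have hJM : ∀ t, 0 ≤ t → Jfun μ q I t ≤ M * M := by
    intro t ht
    calc Jfun μ q I t ≤ ∫ _ω, M * M ∂μ := by
          apply integral_mono (hJint t ht) (integrable_const _)
          intro ω
          exact mul_le_mul (hbq ω) (le_trans (hIbd t ht ω).2 (hbf ω)) (hIbd t ht ω).1 hM0.le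
      _ = M * M := by simp
  -- the fraction is in [0,1]
  have hden : ∀ b : ℝ, 0 ≤ b → ∀ ω, 0 < β ω * b + γ ω := by
    intro b hb ω
    have := mul_nonneg (h0β ω) hb
    linarith [hγε ω]
  have hfrac01 : ∀ b : ℝ, 0 ≤ b → ∀ ω,
      0 ≤ β ω * b / (β ω * b + γ ω) ∧ β ω * b / (β ω * b + γ ω) ≤ 1 := by
    intro b hb ω
    constructor
    · exact div_nonneg (mul_nonneg (h0β ω) hb) (hden b hb ω).le
    · rw [div_le_one (hden b hb ω)]
      linarith [h0γ ω]
  -- pointwise decay estimate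
  have ptwise : ∀ b : ℝ, 0 ≤ b → ∀ t₀ : ℝ, 1 ≤ t₀ → (∀ t, t₀ ≤ t → Jfun μ q I t ≤ b) →
      ∀ ω, η ω * f ω = 0 → ∀ t, t₀ ≤ t →
      I t ω ≤ f ω * (β ω * b / (β ω * b + γ ω)) + M * Real.exp (-ε * (t - t₀)) := by
    intro b hb t₀ ht₀ hJb ω hω t ht
    by_cases hf0 : f ω = 0
    · have h1 := hIbd t (by linarith) ω
      have hI0 : I t ω = 0 := le_antisymm (hf0 ▸ h1.2) h1.1
      rw [hI0, hf0]
      have := Real.exp_nonneg (-ε * (t - t₀))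
      nlinarith
    · have hη0 : η ω = 0 := by
        rcases mul_eq_zero.1 hω with h | h
        · exact h
        · exact absurd h hf0
      set B := β ω * b + γ ω with hBdef
      set c := β ω * b * f ω with hcdef
      have hBpos : 0 < B := hden b hb ω
      have hBε : ε ≤ B := by
        have := mul_nonneg (h0β ω) hb
        have := hγε ω
        simp only [hBdef]; linarith
      have hu : ∀ s, t₀ ≤ s → HasDerivAt (fun r => I r ω) (Dfun μ q β γ η f I s ω) s := by
        intro s hs
        exact (hIderiv ω s (by linarith)).hasDerivAt (Ici_mem_nhds (by linarith))
      have hd : ∀ s, t₀ ≤ s → Dfun μ q β γ η f I s ω ≤ c - B * I s ω := by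
        intro s hs
        have hJ := hJb s hs
        have h1 := hIbd s (by linarith) ω
        simp only [Dfun, hη0, add_zero, hcdef, hBdef]
        nlinarith [mul_nonneg (mul_nonneg (h0β ω) (sub_nonneg.2 hJ)) (sub_nonneg.2 h1.2)]
      have key := ode_bound _ _ c B t₀ hBpos hu hd t ht
      have hcB : c / B = f ω * (β ω * b / B) := by
        rw [show c = f ω * (β ω * b) by rw [hcdef]; ring, mul_div_assoc]
      have hc0 : 0 ≤ c / B := div_nonneg
        (by rw [hcdef]; exact mul_nonneg (mul_nonneg (h0β ω) hb) (h0f ω)) hBpos.le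
      have h4 : (I t₀ ω - c / B) * Real.exp (-B * (t - t₀)) ≤ M * Real.exp (-ε * (t - t₀)) := by
        rcases le_or_gt (I t₀ ω - c / B) 0 with h | h
        · exact le_trans (mul_nonpos_of_nonpos_of_nonneg h (Real.exp_nonneg _))
            (mul_nonneg hM0.le (Real.exp_nonneg _))
        · apply mul_le_mul
          · have := (hIbd t₀ (by linarith) ω).2
            linarith [hbf ω]
          · apply Real.exp_le_exp.2
            nlinarith
          · exact Real.exp_nonneg _
          · exact hM0.le
      rw [hcB] at key h4
      linarith
  -- the contraction map T
  set T : ℝ → ℝ := fun b => ∫ ω, q ω * (f ω * (β ω * b / (β ω * b + γ ω))) ∂μ with hT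
  have hTmeas : ∀ b : ℝ, Measurable (fun ω => q ω * (f ω * (β ω * b / (β ω * b + γ ω)))) := by
    intro b
    exact hmq.mul (hmf.mul (((hmβ.mul_const b)).div ((hmβ.mul_const b).add hmγ)))
  have hTint : ∀ b : ℝ, 0 ≤ b →
      Integrable (fun ω => q ω * (f ω * (β ω * b / (β ω * b + γ ω)))) μ := by
    intro b hb
    apply hint _ (hTmeas b) (M * M)
    intro ω
    obtain ⟨hh1, hh2⟩ := hfrac01 b hb ω
    rw [abs_of_nonneg (mul_nonneg (h0q ω) (mul_nonneg (h0f ω) hh1))]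
    calc q ω * (f ω * (β ω * b / (β ω * b + γ ω))) ≤ q ω * (f ω * 1) :=
          mul_le_mul_of_nonneg_left (mul_le_mul_of_nonneg_left hh2 (h0f ω)) (h0q ω)
      _ ≤ M * M := by
          rw [mul_one]
          exact mul_le_mul (hbq ω) (hbf ω) (h0f ω) hM0.le
  have hqfI : Integrable (fun ω => q ω * f ω) μ := by
    apply hint _ (hmq.mul hmf) (M * M)
    intro ω
    rw [Pi.mul_apply, abs_of_nonneg (mul_nonneg (h0q ω) (h0f ω))]
    exact mul_le_mul (hbq ω) (hbf ω) (h0f ω) hM0.le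
  -- key integral inequality
  have keyJ : ∀ b : ℝ, 0 ≤ b → ∀ t₀ : ℝ, 1 ≤ t₀ → (∀ t, t₀ ≤ t → Jfun μ q I t ≤ b) →
      ∀ t, t₀ ≤ t → Jfun μ q I t ≤ T b + M * M * Real.exp (-ε * (t - t₀)) := by
    intro b hb t₀ ht₀ hJb t ht
    have hae : ∀ᵐ ω ∂μ, q ω * I t ω ≤
        q ω * (f ω * (β ω * b / (β ω * b + γ ω))) + M * M * Real.exp (-ε * (t - t₀)) := by
      filter_upwards [hηf] with ω hω
      have h1 := ptwise b hb t₀ ht₀ hJb ω hω t ht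
      have h2 := mul_le_mul_of_nonneg_left h1 (h0q ω)
      rw [mul_add] at h2
      have h3 : q ω * (M * Real.exp (-ε * (t - t₀))) ≤ M * (M * Real.exp (-ε * (t - t₀))) :=
        mul_le_mul_of_nonneg_right (hbq ω) (mul_nonneg hM0.le (Real.exp_nonneg _))
      calc q ω * I t ω ≤ q ω * (f ω * (β ω * b / (β ω * b + γ ω)))
            + q ω * (M * Real.exp (-ε * (t - t₀))) := h2
        _ ≤ q ω * (f ω * (β ω * b / (β ω * b + γ ω)))
            + M * M * Real.exp (-ε * (t - t₀)) := by rw [← mul_assoc] at h3; linarith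
    have hii : Integrable (fun ω => q ω * (f ω * (β ω * b / (β ω * b + γ ω)))
        + M * M * Real.exp (-ε * (t - t₀))) μ := (hTint b hb).add (integrable_const _)
    have := integral_mono_ae (hJint t (by linarith)) hii hae
    rw [integral_add (hTint b hb) (integrable_const _), integral_const] at this
    simpa [Jfun, hT] using this
  -- limsup machinery
  set A := limsup (Jfun μ q I) atTop with hA
  have hevge : ∀ᶠ t in atTop, (0:ℝ) ≤ Jfun μ q I t := eventually_atTop.2 ⟨0, hJ0⟩
  have hevle : ∀ᶠ t in atTop, Jfun μ q I t ≤ M * M := eventually_atTop.2 ⟨0, hJM⟩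
  have hbdd : IsBoundedUnder (· ≤ ·) atTop (Jfun μ q I) := isBoundedUnder_of_eventually_le hevle
  have hbddge : IsBoundedUnder (· ≥ ·) atTop (Jfun μ q I) := isBoundedUnder_of_eventually_ge hevge
  have hcob : IsCoboundedUnder (· ≤ ·) atTop (Jfun μ q I) := hbddge.isCoboundedUnder_le
  have hA0 : 0 ≤ A := le_limsup_of_frequently_le hevge.frequently hbdd
  -- for all b > A, A ≤ T b
  have hAle : ∀ b, A < b → A ≤ T b := by
    intro b hb
    have hb0 : 0 ≤ b := le_trans hA0 hb.le
    have hev : ∀ᶠ t in atTop, Jfun μ q I t < b := eventually_lt_of_limsup_lt hb hbdd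
    obtain ⟨N, hN⟩ := eventually_atTop.1 hev
    set t₀ := max N 1 with ht₀def
    have ht₀1 : (1:ℝ) ≤ t₀ := le_max_right _ _
    have hJb : ∀ t, t₀ ≤ t → Jfun μ q I t ≤ b := fun t ht =>
      (hN t (le_trans (le_max_left _ _) ht)).le
    have hkey := keyJ b hb0 t₀ ht₀1 hJb
    have htend : Tendsto (fun t => T b + M * M * Real.exp (-ε * (t - t₀))) atTop
        (𝓝 (T b + M * M * 0)) :=
      tendsto_const_nhds.add (tendsto_const_nhds.mul (exp_term_tendsto ε t₀ hε))
    have hlim1 : limsup (Jfun μ q I) atTop ≤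
        limsup (fun t => T b + M * M * Real.exp (-ε * (t - t₀))) atTop := by
      apply limsup_le_limsup _ hcob htend.isBoundedUnder_le
      exact eventually_atTop.2 ⟨t₀, hkey⟩
    rw [htend.limsup_eq] at hlim1
    simpa using hlim1
  -- Lipschitz-type bound for T
  have hTlip : ∀ a b : ℝ, 0 ≤ a → a ≤ b → T b ≤ T a + M * M / (ε * ε) * (b - a) := by
    intro a b ha hab
    have hb0 : 0 ≤ b := le_trans ha hab
    have hpt : ∀ ω, q ω * (f ω * (β ω * b / (β ω * b + γ ω))) ≤
        q ω * (f ω * (β ω * a / (β ω * a + γ ω))) + q ω * f ω * (M * M / (ε * ε) * (b - a)) := by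
      intro ω
      have hda := hden a ha ω
      have hdb := hden b hb0 ω
      have heq : β ω * b / (β ω * b + γ ω) - β ω * a / (β ω * a + γ ω)
          = β ω * γ ω * (b - a) / ((β ω * b + γ ω) * (β ω * a + γ ω)) := by
        field_simp
        ring
      have hnum : β ω * γ ω * (b - a) ≤ M * M * (b - a) :=
        mul_le_mul_of_nonneg_right (mul_le_mul (hbβ ω) (hbγ ω) (h0γ ω) hM0.le)
          (sub_nonneg.2 hab)
      have hdenlb : ε * ε ≤ (β ω * b + γ ω) * (β ω * a + γ ω) := by
        have h1 : ε ≤ β ω * b + γ ω := le_trans (hγε ω) (by nlinarith [mul_nonneg (h0β ω) hb0])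
        have h2 : ε ≤ β ω * a + γ ω := le_trans (hγε ω) (by nlinarith [mul_nonneg (h0β ω) ha])
        nlinarith
      have hfr : β ω * b / (β ω * b + γ ω) - β ω * a / (β ω * a + γ ω)
          ≤ M * M / (ε * ε) * (b - a) := by
        rw [heq]
        rw [show M * M / (ε * ε) * (b - a) = M * M * (b - a) / (ε * ε) by ring]
        exact div_le_div₀ (mul_nonneg (mul_nonneg hM0.le hM0.le) (sub_nonneg.2 hab))
          hnum (by positivity) hdenlb
      have hqf0 : 0 ≤ q ω * f ω := mul_nonneg (h0q ω) (h0f ω)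
      nlinarith [mul_le_mul_of_nonneg_left hfr hqf0]
    have hi2 : Integrable (fun ω => q ω * (f ω * (β ω * a / (β ω * a + γ ω)))
        + q ω * f ω * (M * M / (ε * ε) * (b - a))) μ :=
      (hTint a ha).add (hqfI.mul_const _)
    have := integral_mono (hTint b hb0) hi2 hpt
    rw [integral_add (hTint a ha) (hqfI.mul_const _), integral_mul_const, hqfint] at this
    simpa using this
  -- A ≤ T A
  have hATA : A ≤ T A := by
    apply le_of_forall_pos_le_add
    intro δ hδ
    set C := M * M / (ε * ε) with hC
    have hC0 : 0 < C := by positivity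
    set b := A + δ / (C + 1) with hb
    have hbA : A < b := by
      have : 0 < δ / (C + 1) := by positivity
      simp only [hb]; linarith
    have h1 := hAle b hbA
    have h2 := hTlip A b hA0 hbA.le
    have h3 : C * (b - A) ≤ δ := by
      have hbA' : b - A = δ / (C + 1) := by rw [hb]; ring
      rw [hbA', show C * (δ / (C + 1)) = C * δ / (C + 1) from by ring,
        div_le_iff₀ (by positivity : (0:ℝ) < C + 1)]
      nlinarith
    linarith
  -- A = 0
  have hAzero : A = 0 := by
    by_contra hne0
    have hApos : 0 < A := lt_of_le_of_ne hA0 (Ne.symm hne0)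
    set c₀ := ε * ε * A * A / (M * (M * A + M)) with hc₀
    have hc₀pos : 0 < c₀ := by positivity
    have hpt : ∀ ω, q ω * (f ω * (β ω * A / (β ω * A + γ ω))) ≤
        q ω * f ω * (β ω / γ ω) * A - q ω * f ω * c₀ := by
      intro ω
      have hγpos : 0 < γ ω := lt_of_lt_of_le hε (hγε ω)
      have hdA := hden A hA0 ω
      have hgap : β ω * A / γ ω - β ω * A / (β ω * A + γ ω)
          = (β ω * A) * (β ω * A) / (γ ω * (β ω * A + γ ω)) := by
        field_simp
        ring
      have hgapge : c₀ ≤ (β ω * A) * (β ω * A) / (γ ω * (β ω * A + γ ω)) := by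
        rw [hc₀, show ε * ε * A * A = (ε * A) * (ε * A) by ring]
        apply div_le_div₀ (mul_nonneg (mul_nonneg (h0β ω) hA0) (mul_nonneg (h0β ω) hA0))
        · have h1 : ε * A ≤ β ω * A := mul_le_mul_of_nonneg_right (hβε ω) hA0
          nlinarith [mul_nonneg (mul_nonneg hε.le hA0) (sub_nonneg.2 h1)]
        · positivity
        · apply mul_le_mul (hbγ ω) _ hdA.le hM0.le
          have h2 : β ω * A ≤ M * A := mul_le_mul_of_nonneg_right (hbβ ω) hA0
          linarith [hbγ ω]
      have hfr : β ω * A / (β ω * A + γ ω) ≤ β ω / γ ω * A - c₀ := by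
        have : β ω * A / γ ω = β ω / γ ω * A := by ring
        rw [← this]
        linarith [hgap ▸ hgapge]
      have hqf0 : 0 ≤ q ω * f ω := mul_nonneg (h0q ω) (h0f ω)
      nlinarith [mul_le_mul_of_nonneg_left hfr hqf0]
    have hiR : Integrable (fun ω => q ω * f ω * (β ω / γ ω)) μ := by
      apply hint _ ((hmq.mul hmf).mul (hmβ.div hmγ)) (M * M * (M / ε))
      intro ω
      have hγpos : 0 < γ ω := lt_of_lt_of_le hε (hγε ω)
      have hβγ : β ω / γ ω ≤ M / ε := div_le_div₀ hM0.le (hbβ ω) hε (hγε ω)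
      have h0βγ : 0 ≤ β ω / γ ω := div_nonneg (h0β ω) hγpos.le
      rw [Pi.mul_apply, Pi.mul_apply, Pi.div_apply, abs_of_nonneg (mul_nonneg (mul_nonneg (h0q ω) (h0f ω)) h0βγ)]
      apply mul_le_mul _ hβγ h0βγ (by positivity)
      exact mul_le_mul (hbq ω) (hbf ω) (h0f ω) hM0.le
    have hi2 : Integrable (fun ω => q ω * f ω * (β ω / γ ω) * A - q ω * f ω * c₀) μ :=
      (hiR.mul_const _).sub (hqfI.mul_const _)
    have hTA := integral_mono (hTint A hA0) hi2 hpt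
    rw [integral_sub (hiR.mul_const _) (hqfI.mul_const _), integral_mul_const,
      integral_mul_const, hqfint, ← hR₀] at hTA
    have hfin : T A ≤ R₀ * A - c₀ := by simpa using hTA
    have hR₀A : R₀ * A ≤ A := by nlinarith [mul_nonneg (sub_nonneg.2 hR₀le) hA0]
    linarith [hATA]
  -- J tends to 0
  have hJtend : Tendsto (Jfun μ q I) atTop (𝓝 0) := by
    apply tendsto_order.2
    constructor
    · intro c hc
      filter_upwards [hevge] with t ht
      linarith
    · intro c hc
      have : limsup (Jfun μ q I) atTop < c := by rw [← hA, hAzero]; exact hc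
      exact eventually_lt_of_limsup_lt this hbdd
  -- conclusion
  filter_upwards [hηf] with ω hω
  apply tendsto_order.2
  constructor
  · intro c hc
    filter_upwards [eventually_atTop.2 ⟨0, fun t ht => (hIbd t ht ω).1⟩] with t ht
    linarith
  · intro c hc
    by_cases hf0 : f ω = 0
    · filter_upwards [eventually_atTop.2 ⟨0, fun t (ht : (0:ℝ) ≤ t) => hIbd t ht ω⟩] with t ht
      have : I t ω = 0 := le_antisymm (hf0 ▸ ht.2) ht.1
      linarith
    · set b := c * ε / (2 * M * M + 1) with hbdef
      have hb0 : 0 < b := by positivity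
      have hev : ∀ᶠ t in atTop, Jfun μ q I t < b := hJtend.eventually_lt_const hb0
      obtain ⟨N, hN⟩ := eventually_atTop.1 hev
      set t₀ := max N 1 with ht₀def
      have ht₀1 : (1:ℝ) ≤ t₀ := le_max_right _ _
      have hJb : ∀ t, t₀ ≤ t → Jfun μ q I t ≤ b := fun t ht =>
        (hN t (le_trans (le_max_left _ _) ht)).le
      have hpt := ptwise b hb0.le t₀ ht₀1 hJb ω hω
      -- first term < c/2
      have hterm1 : f ω * (β ω * b / (β ω * b + γ ω)) < c / 2 := by
        have hdb := hden b hb0.le ω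
        have hγpos : 0 < γ ω := lt_of_lt_of_le hε (hγε ω)
        have h1 : β ω * b / (β ω * b + γ ω) ≤ β ω * b / γ ω := by
          apply div_le_div₀ (mul_nonneg (h0β ω) hb0.le) le_rfl hγpos
          nlinarith [mul_nonneg (h0β ω) hb0.le]
        have h2 : β ω * b / γ ω ≤ M * b / ε :=
          div_le_div₀ (by positivity) (mul_le_mul_of_nonneg_right (hbβ ω) hb0.le) hε (hγε ω)
        have h3 : f ω * (β ω * b / (β ω * b + γ ω)) ≤ M * (M * b / ε) := by
          apply mul_le_mul (hbf ω) (le_trans h1 h2) _ hM0.le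
          exact div_nonneg (mul_nonneg (h0β ω) hb0.le) hdb.le
        have h4 : M * (M * b / ε) < c / 2 := by
          rw [hbdef]
          rw [show M * (M * (c * ε / (2 * M * M + 1)) / ε) = M * M * c / (2 * M * M + 1) by
            field_simp]
          rw [div_lt_iff₀ (by positivity)]
          nlinarith
        linarith
      -- second term eventually < c/2
      have hterm2 : ∀ᶠ t in atTop, M * Real.exp (-ε * (t - t₀)) < c / 2 := by
        have : Tendsto (fun t => M * Real.exp (-ε * (t - t₀))) atTop (𝓝 (M * 0)) :=
          tendsto_const_nhds.mul (exp_term_tendsto ε t₀ hε)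
        rw [mul_zero] at this
        exact this.eventually_lt_const (by positivity)
      filter_upwards [hterm2, eventually_atTop.2 ⟨t₀, fun t (ht : t₀ ≤ t) => hpt t ht⟩]
        with t h2 h1
      linarith
end

section
/- Suppose η(ω)f(ω) = 0 for μ-a.e. ω, and let I be a solution of the heterogeneous SIS model. Then for every t ≥ 0 with J(t) > 0, the following equivalence holds: ∫_Ω q(ω) (β(ω)/γ(ω)) I(t,ω) dμ(ω) < R₀ − 1 if and only if ∫_Ω (q(ω)/γ(ω)) ∂I/∂t(t,ω) dμ(ω) > 0, where R₀ = ∫_Ω q(ω) f(ω) β(ω)/γ(ω) dμ(ω). -/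
open MeasureTheory Filter Set Topology

variable {Ω : Type*} [MeasurableSpace Ω]

/-- If `η f = 0` a.e. then for every solution and every `t ≥ 0` with `J(t) > 0`:
`∫ q (β/γ) I(t,·) dμ < R₀ − 1` iff `∫ (q/γ) ∂I/∂t(t,·) dμ > 0`. -/
theorem stmt_16
    {Ω : Type*} [MeasurableSpace Ω] (μ : Measure Ω) [IsProbabilityMeasure μ]
    (q β γ η f : Ω → ℝ)
    (hmq : Measurable q) (hmβ : Measurable β) (hmγ : Measurable γ)
    (hmη : Measurable η) (hmf : Measurable f)
    (h0q : ∀ ω, 0 ≤ q ω) (h0β : ∀ ω, 0 ≤ β ω) (h0γ : ∀ ω, 0 ≤ γ ω)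
    (h0η : ∀ ω, 0 ≤ η ω) (h0f : ∀ ω, 0 ≤ f ω)
    (M : ℝ) (hbq : ∀ ω, q ω ≤ M) (hbβ : ∀ ω, β ω ≤ M) (hbγ : ∀ ω, γ ω ≤ M)
    (hbη : ∀ ω, η ω ≤ M) (hbf : ∀ ω, f ω ≤ M)
    (hfint : ∫ ω, f ω ∂μ = 1) (hqfint : ∫ ω, q ω * f ω ∂μ = 1)
    (hqpos : ∀ᵐ ω ∂μ, 0 < q ω)
    (ε : ℝ) (hε : 0 < ε) (hβε : ∀ ω, ε ≤ β ω) (hγε : ∀ ω, ε ≤ γ ω)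
    (hηf : ∀ᵐ ω ∂μ, η ω * f ω = 0)
    (R₀ : ℝ) (hR₀ : R₀ = ∫ ω, q ω * f ω * (β ω / γ ω) ∂μ)
    (I : ℝ → Ω → ℝ) (hI : IsSolution μ q β γ η f I) :
    ∀ t, 0 ≤ t → 0 < Jfun μ q I t →
      ((∫ ω, q ω * (β ω / γ ω) * I t ω ∂μ) < R₀ - 1 ↔
        0 < ∫ ω, (q ω / γ ω) * Dfun μ q β γ η f I t ω ∂μ) := by
  intro t ht hJ
  obtain ⟨hmeas, hbnd, _, _⟩ := hI
  set J : ℝ := Jfun μ q I t with hJdef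
  have hγpos : ∀ ω, 0 < γ ω := fun ω => lt_of_lt_of_le hε (hγε ω)
  have hmI : Measurable (fun ω => I t ω) := hmeas t ht
  -- a.e. η I = 0
  have hηI : ∀ᵐ ω ∂μ, η ω * I t ω = 0 := by
    filter_upwards [hηf] with ω h0
    have h1 := (hbnd t ht ω).1
    have h2 := (hbnd t ht ω).2
    have h3 := h0η ω
    nlinarith [mul_le_mul_of_nonneg_left h2 h3, mul_nonneg h3 h1]
  -- pointwise-a.e. identity
  have heq : ∀ᵐ ω ∂μ, (q ω / γ ω) * Dfun μ q β γ η f I t ω =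
      J * (q ω * f ω * (β ω / γ ω)) - J * (q ω * (β ω / γ ω) * I t ω) - q ω * I t ω := by
    filter_upwards [hηf, hηI] with ω h1 h2
    have hγ : γ ω ≠ 0 := ne_of_gt (hγpos ω)
    unfold Dfun
    rw [← hJdef]
    field_simp
    ring_nf
    linear_combination q ω * h1 - q ω * h2
  -- integrability helper
  have int_bdd : ∀ (g : Ω → ℝ), Measurable g → ∀ C : ℝ, (∀ ω, |g ω| ≤ C) → Integrable g μ := by
    intro g hg C hC
    exact (integrable_const C).mono' hg.aestronglyMeasurable (Eventually.of_forall hC)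
  have hβγ : ∀ ω, β ω / γ ω ≤ M / ε := fun ω =>
    div_le_div₀ (le_trans (h0β ω) (hbβ ω)) (hbβ ω) hε (hγε ω)
  have hβγ0 : ∀ ω, 0 ≤ β ω / γ ω := fun ω => div_nonneg (h0β ω) (h0γ ω)
  have hI0 : ∀ ω, 0 ≤ I t ω := fun ω => (hbnd t ht ω).1
  have hIM : ∀ ω, I t ω ≤ M := fun ω => le_trans (hbnd t ht ω).2 (hbf ω)
  have int1 : Integrable (fun ω => q ω * f ω * (β ω / γ ω)) μ := by
    apply int_bdd _ (by fun_prop) (M * M * (M / ε))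
    intro ω
    have h0M : (0:ℝ) ≤ M := le_trans (h0q ω) (hbq ω)
    rw [abs_of_nonneg (mul_nonneg (mul_nonneg (h0q ω) (h0f ω)) (hβγ0 ω))]
    exact mul_le_mul (mul_le_mul (hbq ω) (hbf ω) (h0f ω) h0M) (hβγ ω) (hβγ0 ω)
      (mul_nonneg h0M h0M)
  have int2 : Integrable (fun ω => q ω * (β ω / γ ω) * I t ω) μ := by
    apply int_bdd _ (by fun_prop) (M * (M / ε) * M)
    intro ω
    have h0M : (0:ℝ) ≤ M := le_trans (h0q ω) (hbq ω)
    rw [abs_of_nonneg (mul_nonneg (mul_nonneg (h0q ω) (hβγ0 ω)) (hI0 ω))]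
    exact mul_le_mul (mul_le_mul (hbq ω) (hβγ ω) (hβγ0 ω) h0M) (hIM ω) (hI0 ω)
      (mul_nonneg h0M (div_nonneg h0M hε.le))
  have int3 : Integrable (fun ω => q ω * I t ω) μ := by
    apply int_bdd _ (by fun_prop) (M * M)
    intro ω
    have h0M : (0:ℝ) ≤ M := le_trans (h0q ω) (hbq ω)
    rw [abs_of_nonneg (mul_nonneg (h0q ω) (hI0 ω))]
    exact mul_le_mul (hbq ω) (hIM ω) (hI0 ω) h0M
  set A : ℝ := ∫ ω, q ω * (β ω / γ ω) * I t ω ∂μ with hA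
  have key : (∫ ω, (q ω / γ ω) * Dfun μ q β γ η f I t ω ∂μ) = J * R₀ - J * A - J := by
    rw [integral_congr_ae heq]
    have i12 : Integrable (fun ω => J * (q ω * f ω * (β ω / γ ω))
        - J * (q ω * (β ω / γ ω) * I t ω)) μ :=
      (int1.const_mul J).sub (int2.const_mul J)
    rw [integral_sub i12 int3, integral_sub (int1.const_mul J) (int2.const_mul J),
      integral_const_mul, integral_const_mul, hR₀, ← hA]
    rfl
  rw [key]
  constructor <;> intro h <;> nlinarith
end

section
/- Let λ ∈ ℝ and let ζ ∈ L²(Ω, μ) with ζ ≠ 0 satisfy Tζ = λζ. Then: (i) if ∫_Ω q ζ dμ = 0, then (γ(ω) + λ) ζ(ω) = 0 for μ-a.e. ω; (ii) if ∫_Ω q ζ dμ ≠ 0 and γ(ω) + λ ≠ 0 for μ-a.e. ω, then ζ(ω) = (∫_Ω q ζ dμ) · f(ω)β(ω)/(γ(ω) + λ) for μ-a.e. ω and ∫_Ω q(ω) f(ω) β(ω)/(γ(ω) + λ) dμ(ω) = 1. -/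
open MeasureTheory Filter Set Topology

/-- Eigenvalue equation for the linearisation `(Tζ)(ω) = f(ω)β(ω)∫ q ζ dμ − γ(ω)ζ(ω)`
on `L²(Ω,μ)`: if `ζ ≠ 0` in `L²` satisfies `Tζ = λζ`, then (i) if `∫ q ζ dμ = 0` then
`(γ(ω)+λ)ζ(ω) = 0` a.e.; (ii) if `∫ q ζ dμ ≠ 0` and `γ(ω)+λ ≠ 0` a.e., then
`ζ(ω) = (∫ q ζ dμ) f(ω)β(ω)/(γ(ω)+λ)` a.e. and `∫ q f β/(γ+λ) dμ = 1`. -/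
theorem stmt_17
    {Ω : Type*} [MeasurableSpace Ω] (μ : Measure Ω) [IsProbabilityMeasure μ]
    (q β γ f : Ω → ℝ)
    (hmq : Measurable q) (hmβ : Measurable β) (hmγ : Measurable γ)
    (hmf : Measurable f)
    (h0q : ∀ ω, 0 ≤ q ω) (h0β : ∀ ω, 0 ≤ β ω) (h0γ : ∀ ω, 0 ≤ γ ω)
    (h0f : ∀ ω, 0 ≤ f ω)
    (M : ℝ) (hbq : ∀ ω, q ω ≤ M) (hbβ : ∀ ω, β ω ≤ M) (hbγ : ∀ ω, γ ω ≤ M)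
    (hfL2 : MemLp f 2 μ)
    (hfint : ∫ ω, f ω ∂μ = 1) (hqfint : ∫ ω, q ω * f ω ∂μ = 1)
    (hqpos : ∀ᵐ ω ∂μ, 0 < q ω)
    (ε : ℝ) (hε : 0 < ε) (hβε : ∀ ω, ε ≤ β ω) (hγε : ∀ ω, ε ≤ γ ω)
    (lam : ℝ) (ζ : Ω → ℝ) (hζL2 : MemLp ζ 2 μ) (hζne : ¬ (ζ =ᵐ[μ] 0))
    (heig : ∀ᵐ ω ∂μ,
      f ω * β ω * (∫ ω', q ω' * ζ ω' ∂μ) - γ ω * ζ ω = lam * ζ ω) :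
    ((∫ ω', q ω' * ζ ω' ∂μ) = 0 → ∀ᵐ ω ∂μ, (γ ω + lam) * ζ ω = 0) ∧
    ((∫ ω', q ω' * ζ ω' ∂μ) ≠ 0 → (∀ᵐ ω ∂μ, γ ω + lam ≠ 0) →
      ((∀ᵐ ω ∂μ,
          ζ ω = (∫ ω', q ω' * ζ ω' ∂μ) * (f ω * β ω / (γ ω + lam))) ∧
        (∫ ω, q ω * f ω * (β ω / (γ ω + lam)) ∂μ) = 1)) := by

  constructor
  · intro h0
    filter_upwards [heig] with ω hω
    rw [h0, mul_zero, zero_sub] at hω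
    rw [add_mul]
    linarith
  · intro hIne hglam
    have haeζ : ∀ᵐ ω ∂μ, ζ ω = (∫ ω', q ω' * ζ ω' ∂μ) * (f ω * β ω / (γ ω + lam)) := by
      filter_upwards [heig, hglam] with ω hω hne
      field_simp
      linear_combination -hω
    refine ⟨haeζ, ?_⟩
    have h1 : (∫ ω', q ω' * ζ ω' ∂μ)
        = ∫ ω, (∫ ω', q ω' * ζ ω' ∂μ) * (q ω * f ω * (β ω / (γ ω + lam))) ∂μ := by
      refine integral_congr_ae ?_
      filter_upwards [haeζ, hglam] with ω hω hne
      rw [hω]; ring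
    rw [integral_const_mul] at h1
    have h2 : (∫ ω', q ω' * ζ ω' ∂μ) * 1
        = (∫ ω', q ω' * ζ ω' ∂μ) * ∫ ω, q ω * f ω * (β ω / (γ ω + lam)) ∂μ := by
      rw [mul_one]; exact h1
    exact (mul_left_cancel₀ hIne h2).symm
end

section
/- Let γ₀ = inf_{ω ∈ Ω} γ(ω) and define Φ : (−γ₀, ∞) → ℝ by Φ(λ) = ∫_Ω q(ω) f(ω) β(ω)/(γ(ω) + λ) dμ(ω). Then Φ is strictly decreasing on (−γ₀, ∞) and Φ(0) = R₀, where R₀ = ∫_Ω q(ω) f(ω) β(ω)/γ(ω) dμ(ω). Consequently the equation Φ(λ) = 1 has at most one solution λ in (−γ₀, ∞), and any such solution satisfies: λ > 0 if and only if R₀ > 1, λ = 0 if and only if R₀ = 1, and λ < 0 if and only if R₀ < 1. -/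
open MeasureTheory Filter Set Topology

/-- Let `γ₀ = inf γ` and `Φ(λ) = ∫ q f β/(γ+λ) dμ` on `(−γ₀,∞)`. Then `Φ` is
strictly decreasing there, `Φ(0) = R₀`, the equation `Φ(λ) = 1` has at most one
solution in `(−γ₀,∞)`, and any such solution satisfies `λ > 0 ↔ R₀ > 1`,
`λ = 0 ↔ R₀ = 1`, `λ < 0 ↔ R₀ < 1`. -/
theorem stmt_18
    {Ω : Type*} [MeasurableSpace Ω] (μ : Measure Ω) [IsProbabilityMeasure μ]
    (q β γ f : Ω → ℝ)
    (hmq : Measurable q) (hmβ : Measurable β) (hmγ : Measurable γ)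
    (hmf : Measurable f)
    (h0q : ∀ ω, 0 ≤ q ω) (h0β : ∀ ω, 0 ≤ β ω) (h0γ : ∀ ω, 0 ≤ γ ω)
    (h0f : ∀ ω, 0 ≤ f ω)
    (M : ℝ) (hbq : ∀ ω, q ω ≤ M) (hbβ : ∀ ω, β ω ≤ M) (hbγ : ∀ ω, γ ω ≤ M)
    (hbf : ∀ ω, f ω ≤ M)
    (hfint : ∫ ω, f ω ∂μ = 1) (hqfint : ∫ ω, q ω * f ω ∂μ = 1)
    (hqpos : ∀ᵐ ω ∂μ, 0 < q ω)
    (ε : ℝ) (hε : 0 < ε) (hβε : ∀ ω, ε ≤ β ω) (hγε : ∀ ω, ε ≤ γ ω)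
    (γ₀ : ℝ) (hγ₀ : γ₀ = ⨅ ω, γ ω)
    (Φ : ℝ → ℝ)
    (hΦ : ∀ lam, Φ lam = ∫ ω, q ω * f ω * (β ω / (γ ω + lam)) ∂μ)
    (R₀ : ℝ) (hR₀ : R₀ = ∫ ω, q ω * f ω * (β ω / γ ω) ∂μ) :
    StrictAntiOn Φ (Ioi (-γ₀)) ∧
    Φ 0 = R₀ ∧
    (∀ l₁ ∈ Ioi (-γ₀), ∀ l₂ ∈ Ioi (-γ₀), Φ l₁ = 1 → Φ l₂ = 1 → l₁ = l₂) ∧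
    (∀ lam ∈ Ioi (-γ₀), Φ lam = 1 →
      ((0 < lam ↔ 1 < R₀) ∧ (lam = 0 ↔ R₀ = 1) ∧ (lam < 0 ↔ R₀ < 1))) := by
  have hne : Nonempty Ω := by
    by_contra h
    rw [not_nonempty_iff] at h
    have h1 : μ Set.univ = 1 := measure_univ
    rw [Set.eq_empty_of_isEmpty Set.univ, measure_empty] at h1
    exact zero_ne_one h1
  have w : Ω := Classical.choice hne
  haveI := hne
  have hM : 0 < M := hε.trans_le ((hβε w).trans (hbβ w))
  have hγlb : ∀ ω, γ₀ ≤ γ ω := by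
    intro ω
    rw [hγ₀]
    exact ciInf_le ⟨ε, by rintro x ⟨v, rfl⟩; exact hγε v⟩ ω
  have hγ0pos : 0 < γ₀ := hε.trans_le (hγ₀ ▸ le_ciInf hγε)
  have hden : ∀ lam ∈ Ioi (-γ₀), ∀ ω, 0 < γ ω + lam := by
    intro lam hlam ω
    have h1 := hγlb ω
    have h2 : -γ₀ < lam := hlam
    linarith
  have hmeas : ∀ lam : ℝ, Measurable (fun ω => q ω * f ω * (β ω / (γ ω + lam))) :=
    fun lam => (hmq.mul hmf).mul (hmβ.div (hmγ.add measurable_const))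
  have hnn : ∀ lam ∈ Ioi (-γ₀), ∀ ω, 0 ≤ q ω * f ω * (β ω / (γ ω + lam)) := by
    intro lam hlam ω
    exact mul_nonneg (mul_nonneg (h0q ω) (h0f ω))
      (div_nonneg (h0β ω) (hden lam hlam ω).le)
  have hint : ∀ lam ∈ Ioi (-γ₀), Integrable (fun ω => q ω * f ω * (β ω / (γ ω + lam))) μ := by
    intro lam hlam
    have hγ0lam : 0 < γ₀ + lam := by have : -γ₀ < lam := hlam; linarith
    refine Integrable.mono' (integrable_const (M * M * (M / (γ₀ + lam))))
      (hmeas lam).aestronglyMeasurable ?_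
    filter_upwards with ω
    rw [Real.norm_eq_abs, abs_of_nonneg (hnn lam hlam ω)]
    have h1 : β ω / (γ ω + lam) ≤ M / (γ₀ + lam) := by
      apply div_le_div₀ (le_of_lt hM) (hbβ ω) hγ0lam
      linarith [hγlb ω]
    have h2 : 0 ≤ β ω / (γ ω + lam) := div_nonneg (h0β ω) (hden lam hlam ω).le
    calc q ω * f ω * (β ω / (γ ω + lam)) ≤ M * M * (β ω / (γ ω + lam)) := by
          apply mul_le_mul_of_nonneg_right _ h2
          exact mul_le_mul (hbq ω) (hbf ω) (h0f ω) hM.le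
      _ ≤ M * M * (M / (γ₀ + lam)) := by
          apply mul_le_mul_of_nonneg_left h1 (by positivity)
  have hanti : StrictAntiOn Φ (Ioi (-γ₀)) := by
    intro l₁ h₁ l₂ h₂ hlt
    rw [hΦ l₁, hΦ l₂, ← sub_pos, ← integral_sub (hint l₁ h₁) (hint l₂ h₂)]
    set D : Ω → ℝ := fun ω =>
      q ω * f ω * (β ω / (γ ω + l₁)) - q ω * f ω * (β ω / (γ ω + l₂)) with hD
    have hDnn : ∀ ω, 0 ≤ D ω := by
      intro ω
      have hle : β ω / (γ ω + l₂) ≤ β ω / (γ ω + l₁) :=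
        div_le_div_of_nonneg_left (h0β ω) (hden l₁ h₁ ω) (by linarith)
      have := mul_le_mul_of_nonneg_left hle (mul_nonneg (h0q ω) (h0f ω))
      simp only [hD]; linarith
    have hDint : Integrable D μ := (hint l₁ h₁).sub (hint l₂ h₂)
    have h0le : 0 ≤ ∫ ω, D ω ∂μ := integral_nonneg hDnn
    rcases h0le.lt_or_eq with h | h
    · exact h
    · exfalso
      have hD0 : D =ᵐ[μ] 0 :=
        (integral_eq_zero_iff_of_nonneg hDnn hDint).mp h.symm
      have hf0 : f =ᵐ[μ] 0 := by
        filter_upwards [hD0, hqpos] with ω hd hq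
        by_contra hfne
        have hfpos : 0 < f ω := lt_of_le_of_ne (h0f ω) (Ne.symm hfne)
        have hβpos : 0 < β ω := hε.trans_le (hβε ω)
        have hstrict : β ω / (γ ω + l₂) < β ω / (γ ω + l₁) :=
          div_lt_div_of_pos_left hβpos (hden l₁ h₁ ω) (by linarith)
        have : 0 < D ω := by
          simp only [hD]
          have := mul_lt_mul_of_pos_left hstrict (mul_pos hq hfpos)
          linarith
        rw [hd] at this
        exact lt_irrefl 0 this
      have : ∫ ω, f ω ∂μ = 0 := by
        rw [integral_congr_ae hf0]; simp
      rw [hfint] at this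
      exact one_ne_zero this
  have hΦ0 : Φ 0 = R₀ := by
    rw [hΦ 0, hR₀]
    simp only [add_zero]
  have h0mem : (0 : ℝ) ∈ Ioi (-γ₀) := by
    rw [mem_Ioi]; linarith
  refine ⟨hanti, hΦ0, ?_, ?_⟩
  · intro l₁ h₁ l₂ h₂ e₁ e₂
    exact hanti.injOn h₁ h₂ (by rw [e₁, e₂])
  · intro lam hmem heq
    have hA : lam < 0 → R₀ < 1 := by
      intro h
      have := hanti hmem h0mem h
      rw [hΦ0, heq] at this
      linarith
    have hB : lam = 0 → R₀ = 1 := by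
      intro h
      rw [← hΦ0, ← h, heq]
    have hC : 0 < lam → 1 < R₀ := by
      intro h
      have := hanti h0mem hmem h
      rw [hΦ0, heq] at this
      linarith
    rcases lt_trichotomy lam 0 with h | h | h
    · have := hA h
      exact ⟨⟨by intro; linarith, by intro; linarith⟩,
        ⟨by intro; linarith, by intro; linarith⟩,
        ⟨fun _ => this, fun _ => h⟩⟩
    · have := hB h
      exact ⟨⟨by intro; linarith, by intro; linarith⟩,
        ⟨fun _ => this, fun _ => h⟩,
        ⟨by intro; linarith, by intro; linarith⟩⟩
    · have := hC h
      exact ⟨⟨fun _ => this, fun _ => h⟩,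
        ⟨by intro; linarith, by intro; linarith⟩,
        ⟨by intro; linarith, by intro; linarith⟩⟩
end
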